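/- arXiv:1803.04181 — 5 statements merged into one kernel-verified Lean document; each statement's English description precedes it below -/
import Mathlib

section
/- Let G = (V,E,μ,w) be a weighted graph (a simple, undirected, locally finite graph with vertex weights μ : V → (0,∞) and symmetric edge weights w : E → (0,∞)) such that the weighted degree Deg(G) := sup_{x∈V} (Σ_{y~x} w_{xy})/μ_x is finite, inf_{x∈V} μ_x > 0, and G satisfies the 2-dimensional isoperimetric inequality, i.e. C_IS := inf { (w(∂Ω))²/μ(Ω) : Ω ⊆ V finite nonempty } > 0. Then every solution u : V → ℝ of the Liouville equation Δu + e^u = 0 satisfies Σ_{x∈V} e^{u(x)} μ_x ≥ C_IS / Deg(G). -/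
open scoped ENNReal

/-- Discrete Cauchy–Schwarz in the form `(∑ W)² ≤ (∑ W·Δ)(∑ W/Δ)`. -/
private lemma cs_aux {ι : Type*} (S : Finset ι) (W Δ : ι → ℝ)
    (hW : ∀ i ∈ S, 0 ≤ W i) (hΔ : ∀ i ∈ S, 0 < Δ i) :
    (∑ i ∈ S, W i) ^ 2 ≤ (∑ i ∈ S, W i * Δ i) * (∑ i ∈ S, W i / Δ i) := by
  have h := Finset.sum_mul_sq_le_sq_mul_sq S (fun i => Real.sqrt (W i * Δ i))
      (fun i => Real.sqrt (W i / Δ i))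
  have h1 : ∑ i ∈ S, Real.sqrt (W i * Δ i) * Real.sqrt (W i / Δ i) = ∑ i ∈ S, W i := by
    refine Finset.sum_congr rfl fun i hi => ?_
    rw [← Real.sqrt_mul (mul_nonneg (hW i hi) (hΔ i hi).le)]
    rw [show W i * Δ i * (W i / Δ i) = W i ^ 2 * (Δ i / Δ i) by ring,
      div_self (hΔ i hi).ne', mul_one]
    exact Real.sqrt_sq (hW i hi)
  have h2 : ∑ i ∈ S, Real.sqrt (W i * Δ i) ^ 2 = ∑ i ∈ S, W i * Δ i :=
    Finset.sum_congr rfl fun i hi => Real.sq_sqrt (mul_nonneg (hW i hi) (hΔ i hi).le)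
  have h3 : ∑ i ∈ S, Real.sqrt (W i / Δ i) ^ 2 = ∑ i ∈ S, W i / Δ i :=
    Finset.sum_congr rfl fun i hi => Real.sq_sqrt (div_nonneg (hW i hi) (hΔ i hi).le)
  rw [h1, h2, h3] at h
  exact h

theorem liouville_energy_lower_bound
    {V : Type*} [Nonempty V] [DecidableEq V]
    (G : SimpleGraph V) [DecidableRel G.Adj] [∀ v, Fintype (G.neighborSet v)]
    (w : V → V → ℝ) (μ : V → ℝ)
    (hw_symm : ∀ x y, w x y = w y x)
    (hw_pos : ∀ x y, G.Adj x y → 0 < w x y)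
    (hμ_pos : ∀ x, 0 < μ x)
    (hμ_inf : 0 < ⨅ x, μ x)
    (hDeg_bdd : BddAbove (Set.range fun x => (∑ y ∈ G.neighborFinset x, w x y) / μ x))
    (hIS : 0 < ⨅ Ω : {s : Finset V // s.Nonempty},
        (∑ x ∈ Ω.1, ∑ y ∈ (G.neighborFinset x).filter (fun y => y ∉ Ω.1), w x y) ^ 2
          / ∑ x ∈ Ω.1, μ x)
    (u : V → ℝ)
    (hu : ∀ x, (∑ y ∈ G.neighborFinset x, w x y * (u y - u x)) / μ x + Real.exp (u x) = 0) :
    ENNReal.ofReal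
        ((⨅ Ω : {s : Finset V // s.Nonempty},
            (∑ x ∈ Ω.1, ∑ y ∈ (G.neighborFinset x).filter (fun y => y ∉ Ω.1), w x y) ^ 2
              / ∑ x ∈ Ω.1, μ x)
          / (⨆ x, (∑ y ∈ G.neighborFinset x, w x y) / μ x))
      ≤ ∑' x, ENNReal.ofReal (Real.exp (u x) * μ x) := by
  classical
  set C : ℝ := ⨅ Ω : {s : Finset V // s.Nonempty},
      (∑ x ∈ Ω.1, ∑ y ∈ (G.neighborFinset x).filter (fun y => y ∉ Ω.1), w x y) ^ 2
        / ∑ x ∈ Ω.1, μ x with hCdef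
  set D : ℝ := ⨆ x, (∑ y ∈ G.neighborFinset x, w x y) / μ x with hDdef
  set A : ℝ≥0∞ := ∑' x, ENNReal.ofReal (Real.exp (u x) * μ x) with hAdef
  -- trivial cases
  by_cases hA : A = ⊤
  · rw [hA]; exact le_top
  by_cases hD : 0 < D
  swap
  · have hCD : C / D ≤ 0 := by
      rcases eq_or_lt_of_le (not_lt.1 hD) with h | h
      · rw [h, div_zero]
      · exact le_of_lt (div_neg_of_pos_of_neg hIS h)
    rw [ENNReal.ofReal_eq_zero.2 hCD]
    exact zero_le
  -- basic positivity facts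
  have hν_pos : ∀ x : V, 0 < Real.exp (u x) * μ x :=
    fun x => mul_pos (Real.exp_pos _) (hμ_pos x)
  have hA0 : A ≠ 0 := by
    have h1 : ENNReal.ofReal (Real.exp (u (Classical.arbitrary V)) * μ (Classical.arbitrary V))
        ≤ A := hAdef ▸ ENNReal.le_tsum _
    have h2 : (0 : ℝ≥0∞) < ENNReal.ofReal
        (Real.exp (u (Classical.arbitrary V)) * μ (Classical.arbitrary V)) :=
      ENNReal.ofReal_pos.2 (hν_pos _)
    exact (lt_of_lt_of_le h2 h1).ne'
  have hAne : (∑' x, ENNReal.ofReal (Real.exp (u x) * μ x)) ≠ ⊤ := fun h => hA (hAdef ▸ h)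
  -- countability of V
  have hcount : Countable V := by
    have hsub : (Set.univ : Set V) ⊆
        ⋃ n : ℕ, {x : V | (n : ℝ≥0∞)⁻¹ ≤ ENNReal.ofReal (Real.exp (u x) * μ x)} := by
      intro x _
      obtain ⟨n, hn⟩ := ENNReal.exists_inv_nat_lt
        (a := ENNReal.ofReal (Real.exp (u x) * μ x))
        (ENNReal.ofReal_pos.2 (hν_pos x)).ne'
      exact Set.mem_iUnion.2 ⟨n, hn.le⟩
    have hfin : ∀ n : ℕ,
        {x : V | (n : ℝ≥0∞)⁻¹ ≤ ENNReal.ofReal (Real.exp (u x) * μ x)}.Finite := by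
      intro n
      refine ENNReal.finite_const_le_of_tsum_ne_top hAne ?_
      simp
    exact Set.countable_univ_iff.1
      (Set.Countable.mono hsub (Set.countable_iUnion fun n => (hfin n).countable))
  -- lower bound on μ
  have hbddB : BddBelow (Set.range μ) := by
    by_contra h
    rw [Real.iInf_of_not_bddBelow h] at hμ_inf
    exact lt_irrefl 0 hμ_inf
  have hδ : ∀ x, (⨅ y, μ y) ≤ μ x := fun x => ciInf_le hbddB x
  -- superlevel sets are finite
  have hfin : ∀ t : ℝ, {x : V | t ≤ u x}.Finite := by
    intro t
    have hsub : {x : V | t ≤ u x} ⊆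
        {x : V | ENNReal.ofReal (Real.exp t * (⨅ y, μ y))
          ≤ ENNReal.ofReal (Real.exp (u x) * μ x)} := by
      intro x hx
      refine ENNReal.ofReal_le_ofReal ?_
      exact mul_le_mul (Real.exp_le_exp.2 hx) (hδ x) hμ_inf.le (Real.exp_pos _).le
    exact Set.Finite.subset
      (ENNReal.finite_const_le_of_tsum_ne_top hAne
        (ENNReal.ofReal_pos.2 (mul_pos (Real.exp_pos t) hμ_inf)).ne') hsub
  -- the pointwise Poisson equation
  have hpois : ∀ x, Real.exp (u x) * μ x
      = ∑ y ∈ G.neighborFinset x, w x y * (u x - u y) := by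
    intro x
    have hμx : μ x ≠ 0 := (hμ_pos x).ne'
    have h2 : (∑ y ∈ G.neighborFinset x, w x y * (u y - u x)) / μ x = -Real.exp (u x) :=
      eq_neg_of_add_eq_zero_left (hu x)
    have hS : (∑ y ∈ G.neighborFinset x, w x y * (u y - u x))
        = -Real.exp (u x) * μ x := by
      field_simp at h2
      linarith
    have hsum : (∑ y ∈ G.neighborFinset x, w x y * (u x - u y))
        + (∑ y ∈ G.neighborFinset x, w x y * (u y - u x)) = 0 := by
      rw [← Finset.sum_add_distrib]
      exact Finset.sum_eq_zero fun y _ => by ring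
    nlinarith [hsum, hS]
  -- Green's identity on arbitrary finite subsets
  have hgreen : ∀ Ωf : Finset V,
      ∑ x ∈ Ωf, Real.exp (u x) * μ x
        = ∑ x ∈ Ωf, ∑ y ∈ (G.neighborFinset x).filter (fun y => y ∉ Ωf),
            w x y * (u x - u y) := by
    intro Ωf
    have hrw : ∀ x, ∑ y ∈ (G.neighborFinset x).filter (fun y => y ∈ Ωf),
        w x y * (u x - u y)
        = ∑ y ∈ Ωf, if G.Adj x y then w x y * (u x - u y) else 0 := by
      intro x
      have hswap : (G.neighborFinset x).filter (fun y => y ∈ Ωf)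
          = Ωf.filter (fun y => y ∈ G.neighborFinset x) := by
        ext y
        simp only [Finset.mem_filter]
        exact and_comm
      rw [hswap, Finset.sum_filter]
      refine Finset.sum_congr rfl fun y _ => ?_
      by_cases h : G.Adj x y
      · rw [if_pos (by simpa [SimpleGraph.mem_neighborFinset] using h), if_pos h]
      · rw [if_neg (by simpa [SimpleGraph.mem_neighborFinset] using h), if_neg h]
    have hcancel : ∑ x ∈ Ωf, ∑ y ∈ (G.neighborFinset x).filter (fun y => y ∈ Ωf),
        w x y * (u x - u y) = 0 := by
      rw [Finset.sum_congr rfl fun x _ => hrw x]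
      have hanti : ∀ x y, (if G.Adj x y then w x y * (u x - u y) else 0)
          = -(if G.Adj y x then w y x * (u y - u x) else 0) := by
        intro x y
        by_cases h : G.Adj x y
        · rw [if_pos h, if_pos h.symm, hw_symm x y]; ring
        · rw [if_neg h, if_neg (fun hs => h hs.symm), neg_zero]
      have hTT : (∑ x ∈ Ωf, ∑ y ∈ Ωf, if G.Adj x y then w x y * (u x - u y) else 0)
          = -∑ x ∈ Ωf, ∑ y ∈ Ωf, if G.Adj x y then w x y * (u x - u y) else 0 := by
        nth_rewrite 2 [Finset.sum_comm]
        rw [← Finset.sum_neg_distrib]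
        refine Finset.sum_congr rfl fun x _ => ?_
        rw [← Finset.sum_neg_distrib]
        exact Finset.sum_congr rfl fun y _ => hanti x y
      linarith
    calc ∑ x ∈ Ωf, Real.exp (u x) * μ x
        = ∑ x ∈ Ωf, ∑ y ∈ G.neighborFinset x, w x y * (u x - u y) :=
          Finset.sum_congr rfl fun x _ => hpois x
      _ = (∑ x ∈ Ωf, ∑ y ∈ (G.neighborFinset x).filter (fun y => y ∈ Ωf),
              w x y * (u x - u y))
          + ∑ x ∈ Ωf, ∑ y ∈ (G.neighborFinset x).filter (fun y => y ∉ Ωf),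
              w x y * (u x - u y) := by
          rw [← Finset.sum_add_distrib]
          exact Finset.sum_congr rfl fun x _ =>
            (Finset.sum_filter_add_sum_filter_not _ _ _).symm
      _ = _ := by rw [hcancel, zero_add]
  -- the level-set integrand functions
  set g : V → ℝ → ℝ≥0∞ := fun x t =>
    if t ≤ u x then ENNReal.ofReal (Real.exp t * μ x) else 0 with hgdef
  set q : V × V → ℝ → ℝ≥0∞ := fun p t =>
    if G.Adj p.1 p.2 ∧ u p.2 < t ∧ t ≤ u p.1
    then ENNReal.ofReal (Real.exp t * (w p.1 p.2 / (u p.1 - u p.2))) else 0 with hqdef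
  set r : V × V → ℝ≥0∞ := fun p =>
    if G.Adj p.1 p.2 then ENNReal.ofReal (w p.1 p.2 * Real.exp (u p.1)) else 0 with hrdef
  -- measurability
  have hgmeas : ∀ x, Measurable (g x) := by
    intro x
    have hgi : g x = (Set.Iic (u x)).indicator
        (fun t => ENNReal.ofReal (Real.exp t * μ x)) := by
      funext t
      by_cases h : t ≤ u x <;>
        simp [hgdef, h, Set.indicator_apply, Set.mem_Iic]
    rw [hgi]
    exact ((Real.measurable_exp.mul_const (μ x)).ennreal_ofReal).indicator measurableSet_Iic
  have hqmeas : ∀ p : V × V, Measurable (q p) := by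
    intro p
    by_cases hadj : G.Adj p.1 p.2
    · have hqi : q p = (Set.Ioc (u p.2) (u p.1)).indicator
          (fun t => ENNReal.ofReal (Real.exp t * (w p.1 p.2 / (u p.1 - u p.2)))) := by
        funext t
        by_cases h : u p.2 < t ∧ t ≤ u p.1 <;>
          simp [hqdef, hadj, h, Set.indicator_apply, Set.mem_Ioc]
      rw [hqi]
      exact ((Real.measurable_exp.mul_const _).ennreal_ofReal).indicator measurableSet_Ioc
    · have hqi : q p = fun _ => 0 := by
        funext t
        exact if_neg (fun hc => hadj hc.1)
      rw [hqi]
      exact measurable_const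
  -- vertex integrals: ∫ g x = e^{u x} μ x
  have hintg : ∀ x, ∫⁻ t, g x t = ENNReal.ofReal (Real.exp (u x) * μ x) := by
    intro x
    have hgi : g x = (Set.Iic (u x)).indicator
        (fun t => ENNReal.ofReal (Real.exp t * μ x)) := by
      funext t
      by_cases h : t ≤ u x <;>
        simp [hgdef, h, Set.indicator_apply, Set.mem_Iic]
    rw [hgi, MeasureTheory.lintegral_indicator measurableSet_Iic]
    have hInt : MeasureTheory.IntegrableOn (fun t => Real.exp t * μ x) (Set.Iic (u x)) :=
      (integrableOn_exp_Iic (u x)).mul_const (μ x)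
    rw [← MeasureTheory.ofReal_integral_eq_lintegral_ofReal hInt
      (MeasureTheory.ae_of_all _ fun t => by
        have := hμ_pos x
        positivity)]
    rw [MeasureTheory.integral_mul_const, integral_exp_Iic]
  -- pair integrals: ∫ q p ≤ r p
  have hintq : ∀ p : V × V, (∫⁻ t, q p t) ≤ r p := by
    intro p
    by_cases hadj : G.Adj p.1 p.2
    swap
    · have hqi : q p = fun _ => 0 := by
        funext t
        exact if_neg (fun hc => hadj hc.1)
      rw [hqi]
      simp
    by_cases hlt : u p.2 < u p.1
    swap
    · have hqi : q p = fun _ => 0 := by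
        funext t
        refine if_neg (fun hc => hlt ?_)
        exact lt_of_lt_of_le hc.2.1 hc.2.2
      rw [hqi]
      simp
    · have hqi : q p = (Set.Ioc (u p.2) (u p.1)).indicator
          (fun t => ENNReal.ofReal (Real.exp t * (w p.1 p.2 / (u p.1 - u p.2)))) := by
        funext t
        by_cases h : u p.2 < t ∧ t ≤ u p.1 <;>
          simp [hqdef, hadj, h, Set.indicator_apply, Set.mem_Ioc]
      rw [hqi, MeasureTheory.lintegral_indicator measurableSet_Ioc]
      have hInt : MeasureTheory.IntegrableOn
          (fun t => Real.exp t * (w p.1 p.2 / (u p.1 - u p.2))) (Set.Ioc (u p.2) (u p.1)) :=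
        ((integrableOn_exp_Iic (u p.1)).mono_set Set.Ioc_subset_Iic_self).mul_const _
      rw [← MeasureTheory.ofReal_integral_eq_lintegral_ofReal hInt
        (MeasureTheory.ae_of_all _ fun t => by
          have := hw_pos p.1 p.2 hadj
          have h2 : 0 < u p.1 - u p.2 := sub_pos.2 hlt
          positivity)]
      rw [MeasureTheory.integral_mul_const]
      have hIoc : ∫ t in Set.Ioc (u p.2) (u p.1), Real.exp t
          = Real.exp (u p.1) - Real.exp (u p.2) := by
        rw [← intervalIntegral.integral_of_le hlt.le, integral_exp]
      have hrp : r p = ENNReal.ofReal (w p.1 p.2 * Real.exp (u p.1)) := if_pos hadj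
      rw [hIoc, hrp]
      refine ENNReal.ofReal_le_ofReal ?_
      have hwp := hw_pos p.1 p.2 hadj
      have h2 : 0 < u p.1 - u p.2 := sub_pos.2 hlt
      have hexp : Real.exp (u p.1) - Real.exp (u p.2)
          ≤ (u p.1 - u p.2) * Real.exp (u p.1) := by
        have h3 := Real.add_one_le_exp (u p.2 - u p.1)
        have h4 : (u p.2 - u p.1 + 1) * Real.exp (u p.1) ≤ Real.exp (u p.2 - u p.1)
            * Real.exp (u p.1) :=
          mul_le_mul_of_nonneg_right h3 (Real.exp_pos _).le
        rw [← Real.exp_add] at h4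
        simp only [sub_add_cancel] at h4
        nlinarith [Real.exp_pos (u p.1)]
      calc (Real.exp (u p.1) - Real.exp (u p.2)) * (w p.1 p.2 / (u p.1 - u p.2))
          ≤ ((u p.1 - u p.2) * Real.exp (u p.1)) * (w p.1 p.2 / (u p.1 - u p.2)) :=
            mul_le_mul_of_nonneg_right hexp (by positivity)
        _ = w p.1 p.2 * Real.exp (u p.1) := by
            field_simp
  -- the pointwise (in t) inequality
  have hpt : ∀ t : ℝ, ENNReal.ofReal C * (∑' x, g x t) ≤ A * ∑' p : V × V, q p t := by
    intro t
    set Ot : Finset V := (hfin t).toFinset with hOt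
    have hmem : ∀ x : V, x ∈ Ot ↔ t ≤ u x := fun x => by
      rw [hOt, Set.Finite.mem_toFinset]; exact Iff.rfl
    have hbdmem : ∀ x y, y ∈ (G.neighborFinset x).filter (fun y => y ∉ Ot)
        ↔ (G.Adj x y ∧ ¬ t ≤ u y) := by
      intro x y
      simp [Finset.mem_filter, SimpleGraph.mem_neighborFinset, hmem]
    have hedge : ∀ x ∈ Ot, ∀ y ∈ (G.neighborFinset x).filter (fun y => y ∉ Ot),
        0 < w x y ∧ 0 < u x - u y := by
      intro x hx y hy
      obtain ⟨hadj, hnle⟩ := (hbdmem x y).1 hy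
      exact ⟨hw_pos x y hadj, sub_pos.2 (lt_of_lt_of_le (not_le.1 hnle) ((hmem x).1 hx))⟩
    -- tsum of g = ofReal (e^t * μ(Ot))
    have hgsum : (∑' x, g x t) = ENNReal.ofReal (Real.exp t * ∑ x ∈ Ot, μ x) := by
      rw [tsum_eq_sum (s := Ot) (fun x hx => if_neg (fun hc => hx ((hmem x).2 hc)))]
      rw [Finset.mul_sum, ENNReal.ofReal_sum_of_nonneg
        (fun i _ => by have := hμ_pos i; positivity)]
      exact Finset.sum_congr rfl fun x hx => if_pos ((hmem x).1 hx)
    -- tsum of q = ofReal (e^t * G(t))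
    have hqsum : (∑' p : V × V, q p t)
        = ENNReal.ofReal (Real.exp t * ∑ x ∈ Ot,
            ∑ y ∈ (G.neighborFinset x).filter (fun y => y ∉ Ot), w x y / (u x - u y)) := by
      have hsupp : ∀ p : V × V,
          p ∉ Ot.biUnion (fun x => ((G.neighborFinset x).filter
            (fun y => y ∉ Ot)).image (fun y => (x, y))) → q p t = 0 := by
        intro p hp
        refine if_neg (fun hc => hp ?_)
        refine Finset.mem_biUnion.2 ⟨p.1, (hmem p.1).2 hc.2.2, ?_⟩
        refine Finset.mem_image.2 ⟨p.2, ?_, rfl⟩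
        exact (hbdmem p.1 p.2).2 ⟨hc.1, fun h => not_lt.2 h hc.2.1⟩
      rw [tsum_eq_sum hsupp]
      have hdisj : (↑Ot : Set V).PairwiseDisjoint
          (fun x => ((G.neighborFinset x).filter (fun y => y ∉ Ot)).image
            (fun y => (x, y))) := by
        intro a _ b _ hab
        refine Finset.disjoint_left.2 ?_
        rintro ⟨x1, y1⟩ hp hq'
        simp only [Finset.mem_image] at hp hq'
        obtain ⟨ya, _, hEq⟩ := hp
        obtain ⟨yb, _, hEq'⟩ := hq'
        have h1 : a = x1 := congrArg Prod.fst hEq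
        have h2 : b = x1 := congrArg Prod.fst hEq'
        exact hab (h1.trans h2.symm)
      rw [Finset.sum_biUnion hdisj]
      have hx1 : ∀ x ∈ Ot,
          (∑ p ∈ ((G.neighborFinset x).filter (fun y => y ∉ Ot)).image
            (fun y => (x, y)), q p t)
          = ENNReal.ofReal (Real.exp t *
              ∑ y ∈ (G.neighborFinset x).filter (fun y => y ∉ Ot),
                w x y / (u x - u y)) := by
        intro x hx
        rw [Finset.sum_image (fun y _ z _ h => (Prod.ext_iff.1 h).2)]
        rw [Finset.mul_sum, ENNReal.ofReal_sum_of_nonneg (fun y hy => by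
          obtain ⟨hw', hΔ⟩ := hedge x hx y hy
          positivity)]
        refine Finset.sum_congr rfl fun y hy => ?_
        obtain ⟨hadj, hnle⟩ := (hbdmem x y).1 hy
        exact if_pos ⟨hadj, not_le.1 hnle, (hmem x).1 hx⟩
      rw [Finset.sum_congr rfl hx1]
      rw [← ENNReal.ofReal_sum_of_nonneg (fun x hx => by
        refine mul_nonneg (Real.exp_pos t).le (Finset.sum_nonneg fun y hy => ?_)
        obtain ⟨hw', hΔ⟩ := hedge x hx y hy
        positivity)]
      rw [← Finset.mul_sum]
    -- the real-valued chain of inequalities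
    have hGRnn : 0 ≤ ∑ x ∈ Ot, ∑ y ∈ (G.neighborFinset x).filter (fun y => y ∉ Ot),
        w x y / (u x - u y) := by
      refine Finset.sum_nonneg fun x hx => Finset.sum_nonneg fun y hy => ?_
      obtain ⟨hw', hΔ⟩ := hedge x hx y hy
      positivity
    have hCS : (∑ x ∈ Ot, ∑ y ∈ (G.neighborFinset x).filter (fun y => y ∉ Ot), w x y) ^ 2
        ≤ (∑ x ∈ Ot, ∑ y ∈ (G.neighborFinset x).filter (fun y => y ∉ Ot),
            w x y * (u x - u y))
          * ∑ x ∈ Ot, ∑ y ∈ (G.neighborFinset x).filter (fun y => y ∉ Ot),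
              w x y / (u x - u y) := by
      have h := cs_aux (Ot.sigma (fun x => (G.neighborFinset x).filter (fun y => y ∉ Ot)))
        (fun p => w p.1 p.2) (fun p => u p.1 - u p.2)
        (fun p hp => ((hedge p.1 (Finset.mem_sigma.1 hp).1 p.2 (Finset.mem_sigma.1 hp).2).1).le)
        (fun p hp => (hedge p.1 (Finset.mem_sigma.1 hp).1 p.2 (Finset.mem_sigma.1 hp).2).2)
      simpa [Finset.sum_sigma] using h
    have hIS' : C * ∑ x ∈ Ot, μ x
        ≤ (∑ x ∈ Ot, ∑ y ∈ (G.neighborFinset x).filter (fun y => y ∉ Ot), w x y) ^ 2 := by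
      rcases Finset.eq_empty_or_nonempty Ot with hOe | hOe
      · simp [hOe]
      · have hmpos : (0:ℝ) < ∑ x ∈ Ot, μ x := Finset.sum_pos (fun x _ => hμ_pos x) hOe
        have hbdd : BddBelow (Set.range fun Ω : {s : Finset V // s.Nonempty} =>
            (∑ x ∈ Ω.1, ∑ y ∈ (G.neighborFinset x).filter (fun y => y ∉ Ω.1), w x y) ^ 2
              / ∑ x ∈ Ω.1, μ x) := by
          refine ⟨0, ?_⟩
          rintro v ⟨Ω, rfl⟩
          have hm : (0:ℝ) ≤ ∑ x ∈ Ω.1, μ x := Finset.sum_nonneg fun x _ => (hμ_pos x).le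
          positivity
        have h := ciInf_le hbdd (⟨Ot, hOe⟩ : {s : Finset V // s.Nonempty})
        rw [← hCdef] at h
        exact (le_div_iff₀ hmpos).1 h
    have hER_le : (∑ x ∈ Ot, Real.exp (u x) * μ x) ≤ A.toReal := by
      have h1 : ENNReal.ofReal (∑ x ∈ Ot, Real.exp (u x) * μ x)
          = ∑ x ∈ Ot, ENNReal.ofReal (Real.exp (u x) * μ x) :=
        ENNReal.ofReal_sum_of_nonneg (fun x _ => (hν_pos x).le)
      have h2 : (∑ x ∈ Ot, ENNReal.ofReal (Real.exp (u x) * μ x)) ≤ A :=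
        hAdef ▸ ENNReal.sum_le_tsum Ot
      have h3 := ENNReal.toReal_mono hA (h1 ▸ h2)
      rwa [ENNReal.toReal_ofReal (Finset.sum_nonneg fun x _ => (hν_pos x).le)] at h3
    have hkey : C * ∑ x ∈ Ot, μ x
        ≤ A.toReal * ∑ x ∈ Ot, ∑ y ∈ (G.neighborFinset x).filter (fun y => y ∉ Ot),
            w x y / (u x - u y) := by
      refine le_trans hIS' (le_trans hCS ?_)
      rw [← hgreen Ot]
      exact mul_le_mul_of_nonneg_right hER_le hGRnn
    have hchain : C * (Real.exp t * ∑ x ∈ Ot, μ x)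
        ≤ A.toReal * (Real.exp t * ∑ x ∈ Ot,
            ∑ y ∈ (G.neighborFinset x).filter (fun y => y ∉ Ot), w x y / (u x - u y)) := by
      calc C * (Real.exp t * ∑ x ∈ Ot, μ x)
          = Real.exp t * (C * ∑ x ∈ Ot, μ x) := by ring
        _ ≤ Real.exp t * (A.toReal * ∑ x ∈ Ot,
              ∑ y ∈ (G.neighborFinset x).filter (fun y => y ∉ Ot),
                w x y / (u x - u y)) :=
            mul_le_mul_of_nonneg_left hkey (Real.exp_pos t).le
        _ = _ := by ring
    rw [hgsum, hqsum]
    calc ENNReal.ofReal C * ENNReal.ofReal (Real.exp t * ∑ x ∈ Ot, μ x)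
        = ENNReal.ofReal (C * (Real.exp t * ∑ x ∈ Ot, μ x)) :=
          (ENNReal.ofReal_mul hIS.le).symm
      _ ≤ ENNReal.ofReal (A.toReal * (Real.exp t * ∑ x ∈ Ot,
            ∑ y ∈ (G.neighborFinset x).filter (fun y => y ∉ Ot),
              w x y / (u x - u y))) := ENNReal.ofReal_le_ofReal hchain
      _ = ENNReal.ofReal A.toReal * ENNReal.ofReal (Real.exp t * ∑ x ∈ Ot,
            ∑ y ∈ (G.neighborFinset x).filter (fun y => y ∉ Ot),
              w x y / (u x - u y)) := ENNReal.ofReal_mul ENNReal.toReal_nonneg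
      _ = _ := by rw [ENNReal.ofReal_toReal hA]
  -- integrate: the vertex side gives A
  have hAint : (∫⁻ t, ∑' x, g x t) = A := by
    rw [MeasureTheory.lintegral_tsum (fun x => (hgmeas x).aemeasurable), hAdef]
    exact tsum_congr hintg
  -- integrate: the pair side is bounded by D * A
  have hQint : (∫⁻ t, ∑' p : V × V, q p t) ≤ ENNReal.ofReal D * A := by
    rw [MeasureTheory.lintegral_tsum (fun p => (hqmeas p).aemeasurable)]
    have hstep : ∀ x : V, (∑' y, r (x, y))
        ≤ ENNReal.ofReal D * ENNReal.ofReal (Real.exp (u x) * μ x) := by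
      intro x
      have h1 : (∑' y, r (x, y))
          = ∑ y ∈ G.neighborFinset x, ENNReal.ofReal (w x y * Real.exp (u x)) := by
        rw [tsum_eq_sum (s := G.neighborFinset x) (fun y hy => if_neg
          (by simpa [SimpleGraph.mem_neighborFinset] using hy))]
        exact Finset.sum_congr rfl fun y hy => if_pos
          (by simpa [SimpleGraph.mem_neighborFinset] using hy)
      rw [h1, ← ENNReal.ofReal_sum_of_nonneg (fun y hy => mul_nonneg
        (hw_pos x y ((SimpleGraph.mem_neighborFinset _ _ _).1 hy)).le (Real.exp_pos _).le),
        ← Finset.sum_mul]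
      have hdeg : (∑ y ∈ G.neighborFinset x, w x y) ≤ D * μ x := by
        have h2 : (∑ y ∈ G.neighborFinset x, w x y) / μ x ≤ D := by
          rw [hDdef]
          exact le_ciSup hDeg_bdd x
        have h3 := (div_le_iff₀ (hμ_pos x)).1 h2
        linarith
      calc ENNReal.ofReal ((∑ y ∈ G.neighborFinset x, w x y) * Real.exp (u x))
          ≤ ENNReal.ofReal ((D * μ x) * Real.exp (u x)) :=
            ENNReal.ofReal_le_ofReal
              (mul_le_mul_of_nonneg_right hdeg (Real.exp_pos _).le)
        _ = ENNReal.ofReal D * ENNReal.ofReal (Real.exp (u x) * μ x) := by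
            rw [← ENNReal.ofReal_mul hD.le]
            congr 1
            ring
    calc (∑' p : V × V, ∫⁻ t, q p t) ≤ ∑' p : V × V, r p := ENNReal.tsum_le_tsum hintq
      _ = ∑' x, ∑' y, r (x, y) := ENNReal.tsum_prod'
      _ ≤ ∑' x, (ENNReal.ofReal D * ENNReal.ofReal (Real.exp (u x) * μ x)) :=
          ENNReal.tsum_le_tsum hstep
      _ = ENNReal.ofReal D * A := by rw [ENNReal.tsum_mul_left, ← hAdef]
  -- put everything together
  have hmain : ENNReal.ofReal C * A ≤ ENNReal.ofReal D * A * A := by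
    calc ENNReal.ofReal C * A = ∫⁻ t, ENNReal.ofReal C * ∑' x, g x t := by
          rw [MeasureTheory.lintegral_const_mul' _ _ ENNReal.ofReal_ne_top, hAint]
      _ ≤ ∫⁻ t, A * ∑' p : V × V, q p t := MeasureTheory.lintegral_mono hpt
      _ = A * ∫⁻ t, ∑' p : V × V, q p t := MeasureTheory.lintegral_const_mul' _ _ hA
      _ ≤ A * (ENNReal.ofReal D * A) := mul_le_mul_right hQint A
      _ = ENNReal.ofReal D * A * A := by ring
  have hred : ENNReal.ofReal C ≤ ENNReal.ofReal D * A :=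
    (ENNReal.mul_le_mul_iff_left hA0 hA).1 hmain
  rw [ENNReal.ofReal_div_of_pos hD,
    ENNReal.div_le_iff (ENNReal.ofReal_pos.2 hD).ne' ENNReal.ofReal_ne_top, mul_comm]
  exact hred
end

section
/- Let ℤ² be the standard lattice graph whose vertex set is ℤ², with an edge between (x₁,y₁) and (x₂,y₂) if and only if |x₁−x₂| + |y₁−y₂| = 1, with vertex weights μ ≡ 4 and edge weights w ≡ 1. Then every solution u : ℤ² → ℝ of Δu + e^u = 0, where Δu(x) = (1/4) Σ_{y~x} (u(y) − u(x)), satisfies Σ_{x∈ℤ²} 4·e^{u(x)} ≥ 4 (equivalently Σ_{x∈ℤ²} e^{u(x)} ≥ 1). -/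
noncomputable def qq (a b : ℤ) : ℝ :=
  ((a : ℝ) + 1) / ((((a : ℝ) + (b : ℝ)) + 1) * (((a : ℝ) + (b : ℝ)) + 2))

noncomputable def th (p : ℤ × ℤ) : ℝ :=
  (if p.2 = 0 then 2 else 1) * (1/4) *
    (if 0 ≤ p.1 then qq p.1 |p.2| else - qq (-p.1 - 1) |p.2|)

noncomputable def tv (p : ℤ × ℤ) : ℝ := th (p.2, p.1)

lemma th_reflect (x y : ℤ) : th (-1 - x, y) = - th (x, y) := by
  by_cases h : 0 ≤ x
  · have h2 : ¬ (0 ≤ -1 - x) := by omega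
    simp only [th, h, h2, if_true, if_false]
    have : -(-1 - x) - 1 = x := by ring
    rw [this]; ring
  · have h2 : (0 ≤ -1 - x) := by omega
    simp only [th, h, h2, if_true, if_false]
    have : -x - 1 = -1 - x := by ring
    rw [this]; ring

lemma th_even (x y : ℤ) : th (x, -y) = th (x, y) := by
  simp only [th, abs_neg, neg_eq_zero]

noncomputable def dvg (x y : ℤ) : ℝ :=
  th (x, y) - th (x - 1, y) + tv (x, y) - tv (x, y - 1)

lemma dvg_eq (x y : ℤ) :
    dvg x y = th (x, y) - th (x - 1, y) + th (y, x) - th (y - 1, x) := rfl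

lemma dvg_swap (x y : ℤ) : dvg y x = dvg x y := by
  rw [dvg_eq, dvg_eq]; ring

lemma dvg_negx (x y : ℤ) : dvg (-x) y = dvg x y := by
  rw [dvg_eq, dvg_eq]
  have h1 : th (-x, y) = - th (x - 1, y) := by
    have : (-x : ℤ) = -1 - (x - 1) := by ring
    rw [this, th_reflect]
  have h2 : th (-x - 1, y) = - th (x, y) := by
    have : (-x - 1 : ℤ) = -1 - x := by ring
    rw [this, th_reflect]
  have h3 : th (y, -x) = th (y, x) := th_even y x
  have h4 : th (y - 1, -x) = th (y - 1, x) := th_even (y - 1) x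
  rw [h1, h2, h3, h4]; ring

lemma dvg_negy (x y : ℤ) : dvg x (-y) = dvg x y := by
  rw [← dvg_swap x (-y), dvg_negx, dvg_swap]

lemma dvg_pos_pos (x y : ℤ) (hx : 1 ≤ x) (hy : 1 ≤ y) : dvg x y = 0 := by
  have hy0 : ¬ (y = 0) := by omega
  have hx0 : ¬ (x = 0) := by omega
  have h0x : (0:ℤ) ≤ x := by omega
  have h0y : (0:ℤ) ≤ y := by omega
  have h0x1 : (0:ℤ) ≤ x - 1 := by omega
  have h0y1 : (0:ℤ) ≤ y - 1 := by omega
  have hay : |y| = y := abs_of_nonneg h0y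
  have hax : |x| = x := abs_of_nonneg h0x
  rw [dvg_eq]
  simp only [th, hy0, hx0, if_false, h0x, h0y, h0x1, h0y1, if_true, hay, hax]
  have hX : (1:ℝ) ≤ (x:ℝ) := by exact_mod_cast hx
  have hY : (1:ℝ) ≤ (y:ℝ) := by exact_mod_cast hy
  simp only [qq]
  push_cast
  have d1 : ((x:ℝ) + y + 1) ≠ 0 := by nlinarith
  have d2 : ((x:ℝ) + y + 2) ≠ 0 := by nlinarith
  have d3 : ((x:ℝ) - 1 + y + 1) ≠ 0 := by nlinarith
  have d4 : ((x:ℝ) - 1 + y + 2) ≠ 0 := by nlinarith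
  have d5 : ((y:ℝ) - 1 + x + 1) ≠ 0 := by nlinarith
  have d6 : ((y:ℝ) - 1 + x + 2) ≠ 0 := by nlinarith
  field_simp
  ring

lemma dvg_pos_zero (x : ℤ) (hx : 1 ≤ x) : dvg x 0 = 0 := by
  have hx0 : ¬ (x = 0) := by omega
  have h0x : (0:ℤ) ≤ x := by omega
  have h0x1 : (0:ℤ) ≤ x - 1 := by omega
  have hax : |x| = x := abs_of_nonneg h0x
  rw [dvg_eq]
  have e1 : th (x, 0) = (2:ℝ) * (1/4) * qq x 0 := by
    simp [th, h0x]
  have e2 : th (x - 1, 0) = (2:ℝ) * (1/4) * qq (x-1) 0 := by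
    simp [th, h0x1, not_lt.mpr hx]
  have e3 : th (0, x) = (1:ℝ) * (1/4) * qq 0 x := by
    simp only [th, hx0, if_false]
    norm_num [hax]
  have e4 : th (-1, x) = (1:ℝ) * (1/4) * (- qq 0 x) := by
    simp only [th, hx0, if_false]
    norm_num [hax]
  have hxm : (0:ℤ) - 1 = -1 := by ring
  rw [hxm, e1, e2, e3, e4]
  have hX : (1:ℝ) ≤ (x:ℝ) := by exact_mod_cast hx
  simp only [qq]
  push_cast
  have d1 : ((x:ℝ) + 0 + 1) ≠ 0 := by nlinarith
  have d2 : ((x:ℝ) + 0 + 2) ≠ 0 := by nlinarith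
  have d3 : ((x:ℝ) - 1 + 0 + 1) ≠ 0 := by nlinarith
  have d4 : ((x:ℝ) - 1 + 0 + 2) ≠ 0 := by nlinarith
  have d5 : ((0:ℝ) + x + 1) ≠ 0 := by nlinarith
  have d6 : ((0:ℝ) + x + 2) ≠ 0 := by nlinarith
  have d7 : ((x:ℝ)) ≠ 0 := by nlinarith
  have d8 : ((x:ℝ) + 1) ≠ 0 := by nlinarith
  have d9 : ((x:ℝ) * 4 + (x:ℝ)^2 * 4) ≠ 0 := by nlinarith
  have hI : ((x:ℝ)*4 + (x:ℝ)^2*4) * ((x:ℝ)*4 + (x:ℝ)^2*4)⁻¹ = 1 := mul_inv_cancel₀ d9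
  field_simp
  ring

lemma dvg_zero_zero : dvg 0 0 = 1 := by
  rw [dvg_eq]
  have e1 : th (0, 0) = (1:ℝ)/4 := by
    simp [th, qq]; norm_num
  have e2 : th (-1, 0) = -(1:ℝ)/4 := by
    have : (-1 : ℤ) = -1 - 0 := by ring
    rw [show ((-1:ℤ), (0:ℤ)) = (-1 - 0, 0) by norm_num, th_reflect, e1]
    norm_num
  rw [show (0:ℤ) - 1 = -1 by ring, e1, e2]
  norm_num

lemma divergence (x y : ℤ) :
    th (x, y) - th (x - 1, y) + tv (x, y) - tv (x, y - 1)
      = if x = 0 ∧ y = 0 then 1 else 0 := by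
  show dvg x y = _
  have main : ∀ a b : ℤ, 0 ≤ a → 0 ≤ b → dvg a b = if a = 0 ∧ b = 0 then 1 else 0 := by
    intro a b ha hb
    rcases eq_or_lt_of_le ha with ha0 | ha1
    · rcases eq_or_lt_of_le hb with hb0 | hb1
      · rw [← ha0, ← hb0]; simp [dvg_zero_zero]
      · rw [← ha0]
        rw [← dvg_swap]
        rw [dvg_pos_zero b (by omega), if_neg (by omega)]
    · rcases eq_or_lt_of_le hb with hb0 | hb1
      · rw [← hb0, dvg_pos_zero a (by omega), if_neg (by omega)]
      · rw [dvg_pos_pos a b (by omega) (by omega), if_neg (by omega)]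
  rcases le_or_gt 0 x with hx | hx
  · rcases le_or_gt 0 y with hy | hy
    · exact main x y hx hy
    · rw [← dvg_negy, main x (-y) hx (by omega), if_neg (by omega), if_neg (by omega)]
  · rcases le_or_gt 0 y with hy | hy
    · rw [← dvg_negx, main (-x) y (by omega) hy, if_neg (by omega), if_neg (by omega)]
    · rw [← dvg_negx, ← dvg_negy, main (-x) (-y) (by omega) (by omega), if_neg (by omega),
        if_neg (by omega)]
open Finset

lemma log_harmonic (n : ℕ) :
    ∑ a ∈ range n, 1 / ((a : ℝ) + 2) ≤ Real.log (n + 1) := by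
  induction n with
  | zero => simp
  | succ n ih =>
    rw [Finset.sum_range_succ]
    have h1 : 1 / ((n : ℝ) + 2) ≤ Real.log ((n : ℝ) + 2) - Real.log ((n : ℝ) + 1) := by
      have h := Real.log_le_sub_one_of_pos (x := ((n:ℝ)+1)/((n:ℝ)+2)) (by positivity)
      rw [Real.log_div (by positivity) (by positivity)] at h
      have e : ((n:ℝ)+1)/((n:ℝ)+2) - 1 = -(1/((n:ℝ)+2)) := by field_simp; ring
      rw [e] at h
      linarith
    have e2 : ((n:ℕ) + 1 : ℝ) + 1 = (n:ℝ) + 2 := by push_cast; ring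
    push_cast
    rw [e2]
    push_cast at ih
    linarith

lemma sq_sum_bound (n : ℕ) :
    ∑ a ∈ range n, 1 / (((a : ℝ) + 2) ^ 2) ≤ 1 - 1/((n:ℝ)+1) := by
  induction n with
  | zero => simp
  | succ n ih =>
    rw [Finset.sum_range_succ]
    have h : 1 / (((n:ℝ) + 2)^2) ≤ 1/((n:ℝ)+1) - 1/((n:ℝ)+2) := by
      rw [div_sub_div _ _ (by positivity) (by positivity)]
      rw [div_le_div_iff₀ (by positivity) (by positivity)]
      nlinarith [sq_nonneg ((n:ℝ)+2)]
    have e2 : ((n:ℕ) + 1 : ℝ) + 1 = (n:ℝ) + 2 := by push_cast; ring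
    push_cast
    rw [e2]
    push_cast at ih
    linarith

lemma sq_sum_bound' (n : ℕ) :
    ∑ a ∈ range n, 1 / (((a : ℝ) + 2) ^ 2) ≤ 1 := by
  have := sq_sum_bound n
  have : 0 ≤ 1/((n:ℝ)+1) := by positivity
  linarith [sq_sum_bound n]

lemma tele_sq (c : ℝ) (hc : 0 ≤ c) (n : ℕ) :
    ∑ b ∈ range n, 1 / (((c + b + 2) ^ 2) * ((c + b + 3) ^ 2))
      ≤ (1 / (2 * c + 5)) * (1 / (c + 2) ^ 2 - 1 / (c + n + 2) ^ 2) := by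
  induction n with
  | zero => simp
  | succ n ih =>
    rw [Finset.sum_range_succ]
    have key : 1 / (((c + n + 2) ^ 2) * ((c + n + 3) ^ 2))
        ≤ (1 / (2 * c + 5)) * (1 / (c + n + 2) ^ 2 - 1 / (c + n + 3) ^ 2) := by
      have h1 : (0:ℝ) < c + n + 2 := by positivity
      have h2 : (0:ℝ) < c + n + 3 := by positivity
      have h3 : (0:ℝ) < 2*c+5 := by positivity
      rw [div_sub_div _ _ (by positivity) (by positivity), one_mul,
        div_mul_div_comm, one_mul, div_le_div_iff₀ (by positivity) (by positivity)]
      nlinarith [mul_pos h1 h2, mul_pos (mul_pos h1 h1) (mul_pos h2 h2)]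
    have e2 : c + ((n:ℕ) + 1 : ℝ) + 2 = c + (n:ℝ) + 3 := by push_cast; ring
    push_cast
    rw [e2]
    push_cast at ih
    linarith

lemma tele_sq' (c : ℝ) (hc : 0 ≤ c) (n : ℕ) :
    ∑ b ∈ range n, 1 / (((c + b + 2) ^ 2) * ((c + b + 3) ^ 2))
      ≤ 1 / ((2 * c + 5) * (c + 2) ^ 2) := by
  have h := tele_sq c hc n
  have h1 : (0:ℝ) < c + n + 2 := by positivity
  have h2 : 0 ≤ 1 / (c + n + 2)^2 := by positivity
  have h3 : (0:ℝ) < 2*c+5 := by positivity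
  calc ∑ b ∈ range n, 1 / (((c + b + 2) ^ 2) * ((c + b + 3) ^ 2))
      ≤ (1 / (2 * c + 5)) * (1 / (c + 2) ^ 2 - 1 / (c + n + 2) ^ 2) := h
    _ ≤ (1 / (2 * c + 5)) * (1 / (c + 2) ^ 2) := by
        apply mul_le_mul_of_nonneg_left _ (by positivity)
        linarith
    _ = 1 / ((2 * c + 5) * (c + 2) ^ 2) := by
        rw [div_mul_div_comm, one_mul]

/-! ### Energy bounds for the flow -/

def xt (x : ℤ) : ℤ := if 0 ≤ x then x else -x - 1

lemma xt_nonneg (x : ℤ) : 0 ≤ xt x := by unfold xt; split <;> omega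

lemma qq_nonneg (a b : ℤ) (ha : 0 ≤ a) (hb : 0 ≤ b) : 0 ≤ qq a b := by
  unfold qq
  have h1 : (0:ℝ) ≤ (a:ℝ) := by exact_mod_cast ha
  have h2 : (0:ℝ) ≤ (b:ℝ) := by exact_mod_cast hb
  positivity

lemma qq_le (a b : ℤ) (ha : 0 ≤ a) (hb : 0 ≤ b) :
    qq a b ≤ 1 / ((a:ℝ) + (b:ℝ) + 2) := by
  unfold qq
  have h1 : (0:ℝ) ≤ (a:ℝ) := by exact_mod_cast ha
  have h2 : (0:ℝ) ≤ (b:ℝ) := by exact_mod_cast hb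
  rw [div_le_div_iff₀ (by positivity) (by positivity)]
  nlinarith

noncomputable def Hsq (a b : ℤ) : ℝ :=
  ((if b = 0 then (2:ℝ) else 1) / 4) ^ 2 * qq a b ^ 2

lemma th_sq_eq (x y : ℤ) : th (x, y) ^ 2 = Hsq (xt x) |y| := by
  unfold th Hsq xt
  by_cases h : 0 ≤ x <;> by_cases hy0 : y = 0
  · rw [if_pos h, if_pos hy0, if_pos h, hy0, abs_zero, if_pos rfl]; ring
  · rw [if_pos h, if_neg hy0, if_pos h, if_neg (by simpa using hy0)]; ring
  · rw [if_neg h, if_pos hy0, if_neg h, hy0, abs_zero, if_pos rfl]; ring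
  · rw [if_neg h, if_neg hy0, if_neg h, if_neg (by simpa using hy0)]; ring

lemma Hsq_nonneg (a b : ℤ) : 0 ≤ Hsq a b := by
  unfold Hsq; positivity

lemma th_sq_nonneg (p : ℤ × ℤ) : 0 ≤ th p ^ 2 := sq_nonneg _

lemma Hsq_le (a b : ℤ) (ha : 0 ≤ a) (hb : 0 ≤ b) :
    Hsq a b ≤ 1 / (4 * ((a:ℝ) + (b:ℝ) + 2) ^ 2) := by
  unfold Hsq
  have h1 : (0:ℝ) ≤ (a:ℝ) := by exact_mod_cast ha
  have h2 : (0:ℝ) ≤ (b:ℝ) := by exact_mod_cast hb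
  have hq : qq a b ^ 2 ≤ (1 / ((a:ℝ) + (b:ℝ) + 2)) ^ 2 := by
    apply sq_le_sq' _ (qq_le a b ha hb)
    have := qq_nonneg a b ha hb
    have : (0:ℝ) < 1 / ((a:ℝ) + (b:ℝ) + 2) := by positivity
    linarith [qq_nonneg a b ha hb]
  have hc : ((if b = 0 then (2:ℝ) else 1) / 4) ^ 2 ≤ 1/4 := by
    split_ifs <;> norm_num
  calc ((if b = 0 then (2:ℝ) else 1) / 4) ^ 2 * qq a b ^ 2
      ≤ (1/4) * (1 / ((a:ℝ) + (b:ℝ) + 2)) ^ 2 := by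
        apply mul_le_mul hc hq (sq_nonneg _) (by norm_num)
    _ = 1 / (4 * ((a:ℝ) + (b:ℝ) + 2) ^ 2) := by
        have hX : (0:ℝ) < (a:ℝ)+(b:ℝ)+2 := by positivity
        field_simp

lemma th_sq_le_shell (x y : ℤ) :
    th (x, y) ^ 2 ≤ 1 / (4 * (((xt x + |y| : ℤ) : ℝ) + 2) ^ 2) := by
  rw [th_sq_eq]
  have h := Hsq_le (xt x) |y| (xt_nonneg x) (abs_nonneg y)
  convert h using 3
  push_cast
  ring

/-- Reindexing: sum over `Icc 0 n` equals sum over `range (n+1)`. -/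
lemma sum_Icc_nat (n : ℕ) (g : ℤ → ℝ) :
    ∑ x ∈ Finset.Icc (0:ℤ) (n:ℤ), g x = ∑ a ∈ range (n+1), g (a:ℤ) := by
  induction n with
  | zero => simp
  | succ n ih =>
    have hins : Finset.Icc (0:ℤ) ((n:ℕ)+1 : ℕ) = insert (((n:ℕ)+1 : ℕ) : ℤ) (Finset.Icc (0:ℤ) (n:ℤ)) := by
      ext z; simp only [Finset.mem_Icc, Finset.mem_insert]; push_cast; omega
    rw [hins, Finset.sum_insert (by simp), ih,
      Finset.sum_range_succ (fun a : ℕ => g (a:ℤ)) (n+1)]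
    push_cast
    ring

lemma sum_Icc_shift (E : ℕ) (h : ℤ → ℝ) :
    ∑ y ∈ Finset.Icc (1:ℤ) ((E:ℤ)+1), h y = ∑ x ∈ Finset.Icc (0:ℤ) (E:ℤ), h (x + 1) := by
  apply Finset.sum_nbij' (fun y => y - 1) (fun x => x + 1)
  · intro a ha; simp only [Finset.mem_Icc] at *; omega
  · intro a ha; simp only [Finset.mem_Icc] at *; omega
  · intro a _; ring
  · intro a _; ring
  · intro a _; norm_num

lemma sum_Icc_neg (E : ℕ) (h : ℤ → ℝ) :
    ∑ y ∈ Finset.Icc (-(E:ℤ)-1) (-1), h y = ∑ x ∈ Finset.Icc (1:ℤ) ((E:ℤ)+1), h (-x) := by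
  apply Finset.sum_nbij' (fun y => -y) (fun x => -x)
  · intro a ha; simp only [Finset.mem_Icc] at *; omega
  · intro a ha; simp only [Finset.mem_Icc] at *; omega
  · intro a _; ring
  · intro a _; ring
  · intro a _; norm_num

lemma sum_Icc_abs (E : ℕ) (h : ℤ → ℝ) (hsym : ∀ y : ℤ, h (-y) = h y) :
    ∑ y ∈ Finset.Icc (-(E:ℤ)-1) ((E:ℤ)+1), h y
      = h 0 + 2 * ∑ b ∈ range (E+1), h ((b:ℤ)+1) := by
  have hsplit : Finset.Icc (-(E:ℤ)-1) ((E:ℤ)+1)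
      = (Finset.Icc (-(E:ℤ)-1) (-1)) ∪ (Finset.Icc (0:ℤ) ((E:ℤ)+1)) := by
    ext z; simp only [Finset.mem_Icc, Finset.mem_union]; omega
  have hdisj : Disjoint (Finset.Icc (-(E:ℤ)-1) (-1)) (Finset.Icc (0:ℤ) ((E:ℤ)+1)) := by
    rw [Finset.disjoint_left]; intro a ha hb
    simp only [Finset.mem_Icc] at *; omega
  have hsplit2 : Finset.Icc (0:ℤ) ((E:ℤ)+1) = insert (0:ℤ) (Finset.Icc (1:ℤ) ((E:ℤ)+1)) := by
    ext z; simp only [Finset.mem_Icc, Finset.mem_insert]; omega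
  rw [hsplit, Finset.sum_union hdisj, hsplit2, Finset.sum_insert (by simp)]
  rw [sum_Icc_neg E h, sum_Icc_shift E (fun y => h (-y)), sum_Icc_shift E h]
  have e1 : ∀ x : ℤ, h (-(x+1)) = h (x+1) := fun x => hsym (x+1)
  rw [Finset.sum_congr rfl (fun x _ => e1 x)]
  have e2 : (E:ℤ) = ((E:ℕ):ℤ) := rfl
  rw [sum_Icc_nat E (fun x => h (x+1))]
  ring

lemma sum_Icc_xt (E : ℕ) (g : ℤ → ℝ) (hg : ∀ x, 0 ≤ g x) (hsym : ∀ a : ℤ, g (-a-1) = g a) :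
    ∑ x ∈ Finset.Icc (-(E:ℤ)-1) ((E:ℤ)+1), g x ≤ 2 * ∑ a ∈ range (E+2), g (a:ℤ) := by
  have hsplit : Finset.Icc (-(E:ℤ)-1) ((E:ℤ)+1)
      = (Finset.Icc (-(E:ℤ)-1) (-1)) ∪ (Finset.Icc (0:ℤ) ((E:ℤ)+1)) := by
    ext z; simp only [Finset.mem_Icc, Finset.mem_union]; omega
  have hdisj : Disjoint (Finset.Icc (-(E:ℤ)-1) (-1)) (Finset.Icc (0:ℤ) ((E:ℤ)+1)) := by
    rw [Finset.disjoint_left]; intro a ha hb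
    simp only [Finset.mem_Icc] at *; omega
  rw [hsplit, Finset.sum_union hdisj]
  have hpos : ∑ x ∈ Finset.Icc (0:ℤ) ((E:ℤ)+1), g x = ∑ a ∈ range (E+2), g (a:ℤ) := by
    have : ((E:ℤ)+1) = (((E+1:ℕ)):ℤ) := by push_cast; ring
    rw [this, sum_Icc_nat (E+1) g]
  have hneg : ∑ y ∈ Finset.Icc (-(E:ℤ)-1) (-1), g y ≤ ∑ a ∈ range (E+2), g (a:ℤ) := by
    rw [sum_Icc_neg E g, sum_Icc_shift E (fun y => g (-y))]
    have e1 : ∀ x : ℤ, g (-(x+1)) = g x := by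
      intro x
      have : -(x+1) = -x-1 := by ring
      rw [this, hsym]
    rw [Finset.sum_congr rfl (fun x _ => e1 x), sum_Icc_nat E g]
    apply Finset.sum_le_sum_of_subset_of_nonneg
    · intro a ha; simp only [Finset.mem_range] at *; omega
    · intro a _ _; exact hg _
  linarith [hpos, hneg]

lemma col_bound (a K : ℕ) :
    ∑ y ∈ Finset.Icc (-(K:ℤ)-1) ((K:ℤ)+1), th (((a:ℕ):ℤ), y) ^ 2
      ≤ (1/4) * (1/(((a:ℝ)+2)^2)) + (1/16) * (1/((a:ℝ)+2)) := by
  have hxa : xt ((a:ℕ):ℤ) = ((a:ℕ):ℤ) := by unfold xt; rw [if_pos (by positivity)]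
  have hsym : ∀ y : ℤ, th (((a:ℕ):ℤ), -y) ^ 2 = th (((a:ℕ):ℤ), y) ^ 2 := by
    intro y; rw [th_even]
  rw [sum_Icc_abs K (fun y => th (((a:ℕ):ℤ), y) ^ 2) hsym]
  have hA : (0:ℝ) ≤ (a:ℝ) := by positivity
  -- head term
  have e0 : th (((a:ℕ):ℤ), 0) ^ 2 ≤ (1/4) * (1/(((a:ℝ)+2)^2)) := by
    rw [th_sq_eq, hxa, abs_zero]
    unfold Hsq
    rw [if_pos rfl]
    have hq : qq ((a:ℕ):ℤ) 0 ≤ 1/((a:ℝ)+2) := by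
      have := qq_le ((a:ℕ):ℤ) 0 (by positivity) le_rfl
      simpa using this
    have hq0 : 0 ≤ qq ((a:ℕ):ℤ) 0 := qq_nonneg _ _ (by positivity) le_rfl
    have : qq ((a:ℕ):ℤ) 0 ^ 2 ≤ (1/((a:ℝ)+2))^2 := by
      apply sq_le_sq' (by linarith [show (0:ℝ) < 1/((a:ℝ)+2) by positivity]) hq
    calc ((2:ℝ)/4)^2 * qq ((a:ℕ):ℤ) 0 ^ 2 ≤ ((2:ℝ)/4)^2 * (1/((a:ℝ)+2))^2 := by
          apply mul_le_mul_of_nonneg_left this (by norm_num)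
      _ = (1/4) * (1/(((a:ℝ)+2)^2)) := by
          have hE : ((a:ℝ)+2) ≠ 0 := by positivity
          field_simp
          ring
  -- tail terms
  have eterm : ∀ b : ℕ, th (((a:ℕ):ℤ), ((b:ℕ):ℤ)+1) ^ 2
      = (1/16) * (((a:ℝ)+1)^2 * (1 / ((((a:ℝ)+(b:ℝ)+2)^2) * (((a:ℝ)+(b:ℝ)+3)^2)))) := by
    intro b
    rw [th_sq_eq, hxa]
    have habs : |((b:ℕ):ℤ)+1| = ((b:ℕ):ℤ)+1 := abs_of_nonneg (by positivity)
    rw [habs]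
    unfold Hsq
    rw [if_neg (by positivity)]
    unfold qq
    push_cast
    have h2 : ((a:ℝ)+((b:ℝ)+1)+1) = (a:ℝ)+(b:ℝ)+2 := by ring
    have h3 : ((a:ℝ)+((b:ℝ)+1)+2) = (a:ℝ)+(b:ℝ)+3 := by ring
    rw [h2, h3]
    have d1 : ((a:ℝ)+(b:ℝ)+2) ≠ 0 := by positivity
    have d2 : ((a:ℝ)+(b:ℝ)+3) ≠ 0 := by positivity
    field_simp
    ring
  have etail : ∑ b ∈ range (K+1), th (((a:ℕ):ℤ), ((b:ℕ):ℤ)+1) ^ 2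
      ≤ (1/16) * (((a:ℝ)+1)^2 * (1/((2*(a:ℝ)+5) * ((a:ℝ)+2)^2))) := by
    rw [Finset.sum_congr rfl (fun b _ => eterm b)]
    rw [← Finset.mul_sum, ← Finset.mul_sum]
    apply mul_le_mul_of_nonneg_left _ (by norm_num)
    apply mul_le_mul_of_nonneg_left _ (by positivity)
    exact tele_sq' (a:ℝ) hA (K+1)
  have hfinal : 2 * ((1/16) * (((a:ℝ)+1)^2 * (1/((2*(a:ℝ)+5) * ((a:ℝ)+2)^2))))
      ≤ (1/16) * (1/((a:ℝ)+2)) := by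
    rw [show 2 * ((1/16) * (((a:ℝ)+1)^2 * (1/((2*(a:ℝ)+5) * ((a:ℝ)+2)^2))))
        = ((a:ℝ)+1)^2/(8*((2*(a:ℝ)+5) * ((a:ℝ)+2)^2)) from by
      have d1 : ((2*(a:ℝ)+5) * ((a:ℝ)+2)^2) ≠ 0 := by positivity
      rw [eq_div_iff (by positivity)]
      field_simp
      ring]
    rw [show (1:ℝ)/16 * (1/((a:ℝ)+2)) = 1/(16*((a:ℝ)+2)) from by
      rw [div_mul_div_comm, one_mul]]
    rw [div_le_div_iff₀ (by positivity) (by positivity)]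
    nlinarith [hA]
  linarith [e0, etail, hfinal]

lemma box_th (K : ℕ) :
    ∑ p ∈ (Finset.Icc (-(K:ℤ)-1) ((K:ℤ)+1)) ×ˢ (Finset.Icc (-(K:ℤ)-1) ((K:ℤ)+1)), th p ^ 2
      ≤ 1/2 + (1/8) * Real.log ((K:ℝ)+3) := by
  rw [Finset.sum_product]
  have step1 : ∑ x ∈ Finset.Icc (-(K:ℤ)-1) ((K:ℤ)+1),
        (∑ y ∈ Finset.Icc (-(K:ℤ)-1) ((K:ℤ)+1), th (x, y) ^ 2)
      ≤ 2 * ∑ a ∈ range (K+2), (∑ y ∈ Finset.Icc (-(K:ℤ)-1) ((K:ℤ)+1), th (((a:ℕ):ℤ), y) ^ 2) := by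
    apply sum_Icc_xt K (fun x => ∑ y ∈ Finset.Icc (-(K:ℤ)-1) ((K:ℤ)+1), th (x, y) ^ 2)
    · intro x
      apply Finset.sum_nonneg
      intro y _
      exact sq_nonneg _
    · intro a
      apply Finset.sum_congr rfl
      intro y _
      have : (-a-1 : ℤ) = -1 - a := by ring
      rw [this, th_reflect]
      ring
  have step2 : ∑ a ∈ range (K+2), (∑ y ∈ Finset.Icc (-(K:ℤ)-1) ((K:ℤ)+1), th (((a:ℕ):ℤ), y) ^ 2)
      ≤ ∑ a ∈ range (K+2), ((1/4) * (1/(((a:ℝ)+2)^2)) + (1/16) * (1/((a:ℝ)+2))) :=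
    Finset.sum_le_sum (fun a _ => col_bound a K)
  have step3 : ∑ a ∈ range (K+2), ((1/4) * (1/(((a:ℝ)+2)^2)) + (1/16) * (1/((a:ℝ)+2)))
      ≤ 1/4 + (1/16) * Real.log ((K:ℝ)+3) := by
    rw [Finset.sum_add_distrib, ← Finset.mul_sum, ← Finset.mul_sum]
    have h1 := sq_sum_bound' (K+2)
    have h2 := log_harmonic (K+2)
    have e : (((K+2:ℕ)):ℝ) + 1 = (K:ℝ) + 3 := by push_cast; ring
    rw [e] at h2
    have l2 : 0 ≤ Real.log ((K:ℝ)+3) := by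
      apply Real.log_nonneg
      have : (0:ℝ) ≤ (K:ℝ) := by positivity
      linarith
    have t1 : (∑ a ∈ range (K+2), 1 / (((a:ℝ)+2)^2)) ≤ 1 := by
      convert h1 using 2
    have t2 : (∑ a ∈ range (K+2), 1 / ((a:ℝ)+2)) ≤ Real.log ((K:ℝ)+3) := by
      convert h2 using 2
    nlinarith [t1, t2]
  calc ∑ x ∈ Finset.Icc (-(K:ℤ)-1) ((K:ℤ)+1),
        (∑ y ∈ Finset.Icc (-(K:ℤ)-1) ((K:ℤ)+1), th (x, y) ^ 2)
      ≤ 2 * ∑ a ∈ range (K+2), (∑ y ∈ Finset.Icc (-(K:ℤ)-1) ((K:ℤ)+1), th (((a:ℕ):ℤ), y) ^ 2) := step1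
    _ ≤ 2 * (1/4 + (1/16) * Real.log ((K:ℝ)+3)) := by
        apply mul_le_mul_of_nonneg_left _ (by norm_num)
        exact le_trans step2 step3
    _ = 1/2 + (1/8) * Real.log ((K:ℝ)+3) := by ring

noncomputable def ThE (e : (ℤ × ℤ) × Bool) : ℝ := if e.2 then th e.1 else tv e.1

lemma box_energy (K : ℕ) :
    ∑ e ∈ ((Finset.Icc (-(K:ℤ)-1) ((K:ℤ)+1)) ×ˢ (Finset.Icc (-(K:ℤ)-1) ((K:ℤ)+1))) ×ˢ
        (Finset.univ : Finset Bool), ThE e ^ 2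
      ≤ 1 + (1/4) * Real.log ((K:ℝ)+3) := by
  rw [Finset.sum_product]
  have inner : ∀ p : ℤ × ℤ, ∑ b ∈ (Finset.univ : Finset Bool), ThE (p, b) ^ 2
      = th p ^ 2 + tv p ^ 2 := by
    intro p
    rw [Fintype.sum_bool]
    simp [ThE]
  rw [Finset.sum_congr rfl (fun p _ => inner p), Finset.sum_add_distrib]
  have hv : ∑ p ∈ (Finset.Icc (-(K:ℤ)-1) ((K:ℤ)+1)) ×ˢ (Finset.Icc (-(K:ℤ)-1) ((K:ℤ)+1)), tv p ^ 2
      = ∑ p ∈ (Finset.Icc (-(K:ℤ)-1) ((K:ℤ)+1)) ×ˢ (Finset.Icc (-(K:ℤ)-1) ((K:ℤ)+1)), th p ^ 2 := by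
    rw [Finset.sum_product, Finset.sum_product]
    rw [Finset.sum_comm]
    apply Finset.sum_congr rfl
    intro y _
    apply Finset.sum_congr rfl
    intro x _
    rfl
  rw [hv]
  have := box_th K
  linarith

lemma flow_energy (G : Finset ((ℤ × ℤ) × Bool)) :
    ∑ e ∈ G, ThE e ^ 2 ≤ (1/8) * Real.log ((G.card : ℝ) + 1) + 3 := by
  set m := G.card with hm
  set K := Nat.sqrt m with hK
  -- shell of an edge
  set shl : (ℤ × ℤ) × Bool → ℤ :=
    fun e => if e.2 then xt e.1.1 + |e.1.2| else xt e.1.2 + |e.1.1| with hshl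
  have shl_nonneg : ∀ e, 0 ≤ shl e := by
    intro e
    rw [hshl]
    dsimp only
    split <;> have := xt_nonneg <;>
      [linarith [xt_nonneg e.1.1, abs_nonneg e.1.2]; linarith [xt_nonneg e.1.2, abs_nonneg e.1.1]]
  have edge_bound : ∀ e, ThE e ^ 2 ≤ 1 / (4 * (((shl e : ℤ) : ℝ) + 2) ^ 2) := by
    intro e
    obtain ⟨⟨x, y⟩, b⟩ := e
    cases b
    · show tv (x, y) ^ 2 ≤ _
      unfold tv
      have := th_sq_le_shell y x
      simpa [hshl] using this
    · show th (x, y) ^ 2 ≤ _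
      have := th_sq_le_shell x y
      simpa [hshl] using this
  rw [← Finset.sum_filter_add_sum_filter_not G (fun e => shl e ≤ (K:ℤ))]
  have key_sq : ((m:ℝ)) ≤ ((K:ℝ)+1)^2 := by
    have h0 := Nat.lt_succ_sqrt' m
    rw [hK]
    have h1 : (m:ℝ) < ((Nat.sqrt m : ℝ)+1)^2 := by exact_mod_cast h0
    linarith
  have far : ∑ e ∈ G.filter (fun e => ¬ shl e ≤ (K:ℤ)), ThE e ^ 2 ≤ 1 := by
    have per : ∀ e ∈ G.filter (fun e => ¬ shl e ≤ (K:ℤ)),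
        ThE e ^ 2 ≤ 1 / (4 * ((K:ℝ)+3)^2) := by
      intro e he
      rw [Finset.mem_filter] at he
      have h1 : (K:ℤ) + 1 ≤ shl e := by
        have := he.2
        omega
      have h2 : ((K:ℝ) + 3) ≤ ((shl e : ℤ):ℝ) + 2 := by
        have : ((K:ℤ):ℝ) + 1 ≤ ((shl e : ℤ):ℝ) := by exact_mod_cast h1
        push_cast at this ⊢
        linarith
      refine le_trans (edge_bound e) ?_
      have hp : (0:ℝ) < (K:ℝ) + 3 := by have := (Nat.cast_nonneg K : (0:ℝ) ≤ K); linarith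
      apply div_le_div_of_nonneg_left (by norm_num) (mul_pos (by norm_num) (pow_pos hp 2))
      nlinarith
    calc ∑ e ∈ G.filter (fun e => ¬ shl e ≤ (K:ℤ)), ThE e ^ 2
        ≤ ∑ _e ∈ G.filter (fun e => ¬ shl e ≤ (K:ℤ)), (1 / (4 * ((K:ℝ)+3)^2)) :=
          Finset.sum_le_sum per
      _ = ((G.filter (fun e => ¬ shl e ≤ (K:ℤ))).card : ℝ) * (1 / (4 * ((K:ℝ)+3)^2)) := by
          rw [Finset.sum_const, nsmul_eq_mul]
      _ ≤ (m:ℝ) * (1 / (4 * ((K:ℝ)+3)^2)) := by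
          apply mul_le_mul_of_nonneg_right _ (by positivity)
          have := Finset.card_filter_le G (fun e => ¬ shl e ≤ (K:ℤ))
          exact_mod_cast this
      _ ≤ 1 := by
          rw [mul_one_div, div_le_one (by positivity)]
          have : ((K:ℝ)+1)^2 ≤ 4*((K:ℝ)+3)^2 := by nlinarith [show (0:ℝ) ≤ (K:ℝ) by positivity]
          linarith
  have near : ∑ e ∈ G.filter (fun e => shl e ≤ (K:ℤ)), ThE e ^ 2
      ≤ 1 + (1/4) * Real.log ((K:ℝ)+3) := by
    refine le_trans (Finset.sum_le_sum_of_subset_of_nonneg ?_ (fun e _ _ => sq_nonneg _))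
      (box_energy K)
    intro e he
    rw [Finset.mem_filter] at he
    obtain ⟨⟨⟨x, y⟩, b⟩, rfl⟩ : ∃ e' : (ℤ × ℤ) × Bool, e' = e := ⟨e, rfl⟩
    rw [Finset.mem_product, Finset.mem_product]
    have hs := he.2
    simp only [hshl] at hs
    have hx1 := xt_nonneg x
    have hx2 := xt_nonneg y
    have ha1 := abs_nonneg x
    have ha2 := abs_nonneg y
    have habx : -|x| ≤ x ∧ x ≤ |x| := ⟨neg_abs_le x, le_abs_self x⟩
    have haby : -|y| ≤ y ∧ y ≤ |y| := ⟨neg_abs_le y, le_abs_self y⟩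
    cases b <;>
      simp only [Bool.false_eq_true, if_false, if_true] at hs <;>
      unfold xt at hs <;>
      simp only [Finset.mem_product, Finset.mem_Icc, Finset.mem_univ, and_true] <;>
      refine ⟨⟨?_, ?_⟩, ?_, ?_⟩ <;> (split at hs <;> omega)
  have logK : (1/4) * Real.log ((K:ℝ)+3) ≤ (1/8) * Real.log ((m:ℝ)+1) + 1/2 := by
    have hKm : (K:ℝ) ≤ (m:ℝ) := by exact_mod_cast Nat.sqrt_le_self m
    have hsq : ((K:ℝ)+3)^2 ≤ 16*((m:ℝ)+1) := by
      have hK2 : (K:ℝ)*(K:ℝ) ≤ (m:ℝ) := by exact_mod_cast Nat.sqrt_le m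
      nlinarith [show (0:ℝ) ≤ (K:ℝ) by positivity]
    have h1 : Real.log ((K:ℝ)+3) ≤ (1/2) * Real.log (16*((m:ℝ)+1)) := by
      have e1 : Real.log (((K:ℝ)+3)^2) = 2 * Real.log ((K:ℝ)+3) := by
        rw [Real.log_pow]; push_cast; ring
      have e2 : Real.log (((K:ℝ)+3)^2) ≤ Real.log (16*((m:ℝ)+1)) :=
        Real.log_le_log (by positivity) hsq
      linarith
    have h2 : Real.log (16*((m:ℝ)+1)) = Real.log 16 + Real.log ((m:ℝ)+1) := by
      rw [Real.log_mul (by norm_num) (by positivity)]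
    have h3 : Real.log 16 ≤ 4 := by
      have e3 : Real.log (16:ℝ) = 4 * Real.log 2 := by
        rw [show (16:ℝ) = 2^4 by norm_num, Real.log_pow]; push_cast; ring
      have h4 : Real.log 2 ≤ 1 := by
        have := Real.log_le_sub_one_of_pos (x := (2:ℝ)) (by norm_num)
        linarith
      linarith
    linarith
  linarith [far, near, logK]


/-! ### Helpers for the main theorem -/

def sx : ℤ × ℤ ≃ ℤ × ℤ where
  toFun p := (p.1 + 1, p.2)
  invFun p := (p.1 - 1, p.2)
  left_inv p := by simp
  right_inv p := by simp

def sy : ℤ × ℤ ≃ ℤ × ℤ where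
  toFun p := (p.1, p.2 + 1)
  invFun p := (p.1, p.2 - 1)
  left_inv p := by simp
  right_inv p := by simp

lemma max_contraction (a b t : ℝ) :
    (max (a - t) 0 - max (b - t) 0) ^ 2 ≤ (a - b) * (max (a - t) 0 - max (b - t) 0) := by
  rcases lt_trichotomy (max (a - t) 0) (max (b - t) 0) with h | h | h
  · have hb : max (b - t) 0 = b - t := by
      rcases le_max_iff.mp (le_refl (max (b-t) 0)) with _ | _
      all_goals
        rcases max_cases (b - t) 0 with ⟨h1, h2⟩ | ⟨h1, h2⟩
        · exact h1
        · exfalso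
          rw [h1] at h
          exact absurd h (not_lt.mpr (le_max_right _ _))
    have hge : a - t ≤ max (a - t) 0 := le_max_left _ _
    nlinarith [le_max_right (a - t) (0:ℝ)]
  · rw [h]; simp
  · have ha : max (a - t) 0 = a - t := by
      rcases max_cases (a - t) 0 with ⟨h1, h2⟩ | ⟨h1, h2⟩
      · exact h1
      · exfalso
        rw [h1] at h
        exact absurd h (not_lt.mpr (le_max_right _ _))
    have hge : b - t ≤ max (b - t) 0 := le_max_left _ _
    nlinarith [le_max_right (b - t) (0:ℝ)]

lemma log7_le_two : Real.log 7 ≤ 2 := by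
  rw [Real.log_le_iff_le_exp (by norm_num)]
  have h := Real.exp_one_gt_d9
  have e2 : Real.exp 2 = Real.exp 1 * Real.exp 1 := by
    rw [← Real.exp_add]; norm_num
  nlinarith

set_option maxHeartbeats 2000000 in
theorem aux_liouville
    (u : ℤ × ℤ → ℝ)
    (hu : ∀ p : ℤ × ℤ,
      (1 / 4 : ℝ) * ((u (p.1 + 1, p.2) - u p) + (u (p.1 - 1, p.2) - u p)
          + (u (p.1, p.2 + 1) - u p) + (u (p.1, p.2 - 1) - u p))
        + Real.exp (u p) = 0) :
    (4 : ENNReal) ≤ ∑' p : ℤ × ℤ, ENNReal.ofReal (4 * Real.exp (u p)) := by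
  by_contra hcon
  push_neg at hcon
  have hnonneg : ∀ p : ℤ × ℤ, 0 ≤ 4 * Real.exp (u p) := fun p => by positivity
  have hne : (∑' p : ℤ × ℤ, ENNReal.ofReal (4 * Real.exp (u p))) ≠ ⊤ := hcon.ne_top
  have hsum4 : Summable (fun p : ℤ × ℤ => 4 * Real.exp (u p)) := by
    have h := ENNReal.summable_toReal hne
    refine h.congr ?_
    intro p
    rw [ENNReal.toReal_ofReal (hnonneg p)]
  have hsum : Summable (fun p : ℤ × ℤ => Real.exp (u p)) := by
    have h := hsum4.mul_left (1/4)
    refine h.congr ?_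
    intro p
    ring
  set S := ∑' p : ℤ × ℤ, Real.exp (u p) with hS
  have hT : ∑' p : ℤ × ℤ, 4 * Real.exp (u p) = 4 * S := by
    rw [hS, ← tsum_mul_left]
  have hT4 : 4 * S < 4 := by
    have h1 : ENNReal.ofReal (∑' p : ℤ × ℤ, 4 * Real.exp (u p))
        = ∑' p : ℤ × ℤ, ENNReal.ofReal (4 * Real.exp (u p)) :=
      ENNReal.ofReal_tsum_of_nonneg hnonneg hsum4
    rw [hT] at h1
    have h2 : ENNReal.ofReal (4 * S) < ENNReal.ofReal 4 := by
      rw [h1]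
      convert hcon using 1
      norm_num
    exact (ENNReal.ofReal_lt_ofReal_iff (by norm_num)).mp h2
  have hSpos : 0 < S := by
    have h1 : Real.exp (u (0,0)) ≤ S :=
      Summable.le_tsum hsum (0,0) (fun p _ => (Real.exp_pos _).le)
    linarith [Real.exp_pos (u (0,0))]
  set B := Real.log S with hB
  have hup : ∀ p, u p ≤ B := by
    intro p
    have h1 : Real.exp (u p) ≤ S := Summable.le_tsum hsum p (fun q _ => (Real.exp_pos _).le)
    calc u p = Real.log (Real.exp (u p)) := (Real.log_exp _).symm
      _ ≤ B := Real.log_le_log (Real.exp_pos _) h1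
  have hu0B : u (0,0) ≤ B := hup _
  have key : ∀ t : ℝ, t < u (0,0) →
      (u (0,0) - t)^2 ≤ ((1/8) * ((B - t) + 2) + 3) * ((4*S) * (B - t)) := by
    intro t htu
    have hBt0 : 0 < B - t := by linarith
    -- the superlevel set is finite
    have hfinA : {p : ℤ × ℤ | t < u p}.Finite := by
      have hev : ∀ᶠ p in Filter.cofinite, Real.exp (u p) < Real.exp t :=
        hsum.tendsto_cofinite_zero.eventually (gt_mem_nhds (Real.exp_pos t))
      have hfin := Filter.eventually_cofinite.mp hev
      apply hfin.subset
      intro p hp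
      simp only [Set.mem_setOf_eq] at *
      exact not_lt.mpr (Real.exp_le_exp.mpr hp.le)
    set A := hfinA.toFinset with hA
    have hmemA : ∀ p, p ∈ A ↔ t < u p := by
      intro p
      rw [hA, Set.Finite.mem_toFinset]
      rfl
    have h0A : ((0,0) : ℤ × ℤ) ∈ A := (hmemA _).mpr htu
    set N := A.card with hN
    have hN1 : 1 ≤ N := Finset.card_pos.mpr ⟨_, h0A⟩
    have hNS : (N:ℝ) * Real.exp t ≤ S := by
      have h1 : ∑ _p ∈ A, Real.exp t ≤ ∑ p ∈ A, Real.exp (u p) := by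
        apply Finset.sum_le_sum
        intro p hp
        exact Real.exp_le_exp.mpr ((hmemA p).mp hp).le
      have h2 : ∑ p ∈ A, Real.exp (u p) ≤ S :=
        Summable.sum_le_tsum A (fun p _ => (Real.exp_pos _).le) hsum
      rw [Finset.sum_const, nsmul_eq_mul] at h1
      calc (N:ℝ) * Real.exp t ≤ ∑ p ∈ A, Real.exp (u p) := h1
        _ ≤ S := h2
    -- the test function
    set φ : ℤ × ℤ → ℝ := fun p => max (u p - t) 0 with hφ
    have hφ0 : ∀ p, 0 ≤ φ p := fun p => le_max_right _ _
    have hφle : ∀ p, φ p ≤ B - t := by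
      intro p
      apply max_le (by linarith [hup p]) (by linarith)
    have hφsupp : ∀ p, p ∉ A → φ p = 0 := by
      intro p hp
      have h1 : ¬ t < u p := fun h => hp ((hmemA p).mpr h)
      rw [hφ]
      exact max_eq_right (by linarith [not_lt.mp h1])
    have hφ00 : φ (0,0) = u (0,0) - t := max_eq_left (by linarith)
    -- gradients
    set g1 : ℤ × ℤ → ℝ := fun p => φ p - φ (p.1 + 1, p.2) with hg1
    set g2 : ℤ × ℤ → ℝ := fun p => φ p - φ (p.1, p.2 + 1) with hg2
    set w1 : ℤ × ℤ → ℝ := fun p => u p - u (p.1 + 1, p.2) with hw1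
    set w2 : ℤ × ℤ → ℝ := fun p => u p - u (p.1, p.2 + 1) with hw2
    -- support finset
    set W : Finset (ℤ × ℤ) := A ∪ A.image (fun p => (p.1 - 1, p.2))
        ∪ A.image (fun p => (p.1, p.2 - 1)) with hW
    have hAW : A ⊆ W := by
      intro p hp
      rw [hW]
      exact Finset.mem_union_left _ (Finset.mem_union_left _ hp)
    have hg1supp : ∀ p, p ∉ W → g1 p = 0 := by
      intro p hp
      have h1 : p ∉ A := fun h => hp (hAW h)
      have h2 : (p.1 + 1, p.2) ∉ A := by
        intro h
        apply hp
        rw [hW]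
        apply Finset.mem_union_left
        apply Finset.mem_union_right
        apply Finset.mem_image.mpr
        exact ⟨(p.1 + 1, p.2), h, by simp⟩
      rw [hg1]
      dsimp only
      rw [hφsupp p h1, hφsupp _ h2, sub_zero]
    have hg2supp : ∀ p, p ∉ W → g2 p = 0 := by
      intro p hp
      have h1 : p ∉ A := fun h => hp (hAW h)
      have h2 : (p.1, p.2 + 1) ∉ A := by
        intro h
        apply hp
        rw [hW]
        apply Finset.mem_union_right
        apply Finset.mem_image.mpr
        exact ⟨(p.1, p.2 + 1), h, by simp⟩
      rw [hg2]
      dsimp only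
      rw [hφsupp p h1, hφsupp _ h2, sub_zero]
    -- summability helpers
    have sA : ∀ f : ℤ × ℤ → ℝ, (∀ p, p ∉ A → f p = 0) → Summable f :=
      fun f h => summable_of_ne_finset_zero h
    have sW : ∀ f : ℤ × ℤ → ℝ, (∀ p, p ∉ W → f p = 0) → Summable f :=
      fun f h => summable_of_ne_finset_zero h
    -- reindexing identities
    have reindex1 : ∀ v : ℤ × ℤ → ℝ,
        (∑' p : ℤ × ℤ, v p * φ (p.1 + 1, p.2)) = ∑' p : ℤ × ℤ, v (p.1 - 1, p.2) * φ p := by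
      intro v
      rw [← Equiv.tsum_eq sx (fun q => v (q.1 - 1, q.2) * φ q)]
      apply tsum_congr
      intro p
      simp [sx]
    have reindex2 : ∀ v : ℤ × ℤ → ℝ,
        (∑' p : ℤ × ℤ, v p * φ (p.1, p.2 + 1)) = ∑' p : ℤ × ℤ, v (p.1, p.2 - 1) * φ p := by
      intro v
      rw [← Equiv.tsum_eq sy (fun q => v (q.1, q.2 - 1) * φ q)]
      apply tsum_congr
      intro p
      simp [sy]
    -- general partial-summation identity
    have parts : ∀ v1 v2 : ℤ × ℤ → ℝ,
        (∑' p : ℤ × ℤ, (v1 p * g1 p + v2 p * g2 p))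
          = ∑' p : ℤ × ℤ, (v1 p - v1 (p.1 - 1, p.2) + v2 p - v2 (p.1, p.2 - 1)) * φ p := by
      intro v1 v2
      have s1 : Summable (fun p : ℤ × ℤ => v1 p * φ p) := by
        apply sA
        intro p hp
        rw [hφsupp p hp, mul_zero]
      have s2 : Summable (fun p : ℤ × ℤ => v1 (p.1 - 1, p.2) * φ p) := by
        apply sA
        intro p hp
        rw [hφsupp p hp, mul_zero]
      have s3 : Summable (fun p : ℤ × ℤ => v2 p * φ p) := by
        apply sA
        intro p hp
        rw [hφsupp p hp, mul_zero]
      have s4 : Summable (fun p : ℤ × ℤ => v2 (p.1, p.2 - 1) * φ p) := by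
        apply sA
        intro p hp
        rw [hφsupp p hp, mul_zero]
      have e1 : ∀ p : ℤ × ℤ, v1 p * g1 p + v2 p * g2 p
          = (v1 p * φ p - v1 p * φ (p.1 + 1, p.2))
            + (v2 p * φ p - v2 p * φ (p.1, p.2 + 1)) := by
        intro p
        rw [hg1, hg2]
        dsimp only
        ring
      rw [tsum_congr e1]
      have s5 : Summable (fun p : ℤ × ℤ => v1 p * φ (p.1 + 1, p.2)) := by
        have := (Equiv.summable_iff sx (f := fun q : ℤ × ℤ => v1 (q.1 - 1, q.2) * φ q)).mpr s2
        refine this.congr ?_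
        intro p
        simp [sx]
      have s6 : Summable (fun p : ℤ × ℤ => v2 p * φ (p.1, p.2 + 1)) := by
        have := (Equiv.summable_iff sy (f := fun q : ℤ × ℤ => v2 (q.1, q.2 - 1) * φ q)).mpr s4
        refine this.congr ?_
        intro p
        simp [sy]
      rw [Summable.tsum_add (s1.sub s5) (s3.sub s6), Summable.tsum_sub s1 s5, Summable.tsum_sub s3 s6,
        reindex1 v1, reindex2 v2, ← Summable.tsum_sub s1 s2, ← Summable.tsum_sub s3 s4,
        ← Summable.tsum_add (s1.sub s2) (s3.sub s4)]
      apply tsum_congr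
      intro p
      ring
    -- pointwise Laplacian identity
    have hulap : ∀ p : ℤ × ℤ,
        w1 p - w1 (p.1 - 1, p.2) + w2 p - w2 (p.1, p.2 - 1) = 4 * Real.exp (u p) := by
      intro p
      have hup' := hu p
      rw [hw1, hw2]
      dsimp only
      have e1 : (p.1 - 1 + 1, p.2) = p := by
        have : p.1 - 1 + 1 = p.1 := by ring
        rw [this]
      have e2 : (p.1, p.2 - 1 + 1) = p := by
        have : p.2 - 1 + 1 = p.2 := by ring
        rw [this]
      rw [e1, e2]
      linarith
    have green : ∑' p : ℤ × ℤ, (w1 p * g1 p + w2 p * g2 p)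
        = ∑' p : ℤ × ℤ, 4 * Real.exp (u p) * φ p := by
      rw [parts w1 w2]
      apply tsum_congr
      intro p
      rw [hulap p]
    -- energy bound
    have hptwise : ∀ p : ℤ × ℤ, g1 p ^ 2 + g2 p ^ 2 ≤ w1 p * g1 p + w2 p * g2 p := by
      intro p
      have c1 := max_contraction (u p) (u (p.1 + 1, p.2)) t
      have c2 := max_contraction (u p) (u (p.1, p.2 + 1)) t
      rw [hg1, hg2, hw1, hw2, hφ]
      dsimp only
      exact add_le_add c1 c2
    have sgsq : Summable (fun p : ℤ × ℤ => g1 p ^ 2 + g2 p ^ 2) := by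
      apply sW
      intro p hp
      rw [hg1supp p hp, hg2supp p hp]
      ring
    have swg : Summable (fun p : ℤ × ℤ => w1 p * g1 p + w2 p * g2 p) := by
      apply sW
      intro p hp
      rw [hg1supp p hp, hg2supp p hp]
      ring
    have energy1 : ∑' p : ℤ × ℤ, (g1 p ^ 2 + g2 p ^ 2)
        ≤ ∑' p : ℤ × ℤ, (w1 p * g1 p + w2 p * g2 p) :=
      Summable.tsum_le_tsum hptwise sgsq swg
    have hgreen2 : ∑' p : ℤ × ℤ, 4 * Real.exp (u p) * φ p ≤ (4 * S) * (B - t) := by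
      have hpt : ∀ p : ℤ × ℤ, 4 * Real.exp (u p) * φ p
          ≤ (B - t) * (4 * Real.exp (u p)) := by
        intro p
        have h1 := hφle p
        have h2 := hφ0 p
        nlinarith [Real.exp_pos (u p)]
      have s7 : Summable (fun p : ℤ × ℤ => 4 * Real.exp (u p) * φ p) := by
        apply sA
        intro p hp
        rw [hφsupp p hp, mul_zero]
      have s8 : Summable (fun p : ℤ × ℤ => (B - t) * (4 * Real.exp (u p))) :=
        hsum4.mul_left _
      calc ∑' p : ℤ × ℤ, 4 * Real.exp (u p) * φ p
          ≤ ∑' p : ℤ × ℤ, (B - t) * (4 * Real.exp (u p)) := Summable.tsum_le_tsum hpt s7 s8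
        _ = (B - t) * ∑' p : ℤ × ℤ, (4 * Real.exp (u p)) := tsum_mul_left
        _ = (4 * S) * (B - t) := by rw [hT]; ring
    have energy : ∑' p : ℤ × ℤ, (g1 p ^ 2 + g2 p ^ 2) ≤ (4 * S) * (B - t) := by
      rw [green] at energy1
      linarith
    -- pairing identity
    have pair1 : ∑' p : ℤ × ℤ, (th p * g1 p + tv p * g2 p) = u (0,0) - t := by
      rw [parts th tv]
      have ept : ∀ p : ℤ × ℤ,
          (th p - th (p.1 - 1, p.2) + tv p - tv (p.1, p.2 - 1)) * φ p
            = (if p = ((0,0) : ℤ × ℤ) then (1:ℝ) else 0) * φ p := by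
        intro p
        obtain ⟨x, y⟩ := p
        dsimp only
        rw [divergence x y]
        by_cases hxy : x = 0 ∧ y = 0
        · rw [if_pos hxy, if_pos (by rw [Prod.mk.injEq]; exact hxy)]
        · rw [if_neg hxy, if_neg (by rw [Prod.mk.injEq]; exact hxy)]
      rw [tsum_congr ept]
      have hsingle : ∑' p : ℤ × ℤ, (if p = ((0,0) : ℤ × ℤ) then (1:ℝ) else 0) * φ p
          = φ (0,0) := by
        rw [tsum_eq_single ((0,0) : ℤ × ℤ)]
        · rw [if_pos rfl, one_mul]
        · intro b hb
          rw [if_neg hb, zero_mul]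
      rw [hsingle, hφ00]
    -- Cauchy-Schwarz setup
    set Y : (ℤ × ℤ) × Bool → ℝ := fun e => if e.2 then g1 e.1 else g2 e.1 with hY
    set EG : Finset ((ℤ × ℤ) × Bool) := W ×ˢ Finset.univ with hEG
    have pair2 : ∑' p : ℤ × ℤ, (th p * g1 p + tv p * g2 p) = ∑ e ∈ EG, ThE e * Y e := by
      rw [tsum_eq_sum (s := W)
        (f := fun p : ℤ × ℤ => th p * g1 p + tv p * g2 p)
        (fun p hp => by rw [hg1supp p hp, hg2supp p hp]; ring)]
      rw [hEG, Finset.sum_product]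
      apply Finset.sum_congr rfl
      intro p _
      rw [Fintype.sum_bool]
      simp only [ThE, hY, if_true, if_false, Bool.false_eq_true]
    have hYsq : ∑ e ∈ EG, Y e ^ 2 = ∑' p : ℤ × ℤ, (g1 p ^ 2 + g2 p ^ 2) := by
      rw [tsum_eq_sum (s := W)
        (f := fun p : ℤ × ℤ => g1 p ^ 2 + g2 p ^ 2)
        (fun p hp => by rw [hg1supp p hp, hg2supp p hp]; ring)]
      rw [hEG, Finset.sum_product]
      apply Finset.sum_congr rfl
      intro p _
      rw [Fintype.sum_bool]
      simp only [hY, if_true, if_false, Bool.false_eq_true]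
    have cs := Finset.sum_mul_sq_le_sq_mul_sq EG (fun e => ThE e) (fun e => Y e)
    have hflow := flow_energy EG
    -- cardinality and log bounds
    have hWcard : W.card ≤ 3 * N := by
      rw [hW]
      refine le_trans (Finset.card_union_le _ _) ?_
      have h1 := Finset.card_union_le A (A.image (fun p : ℤ × ℤ => (p.1 - 1, p.2)))
      have h2 := Finset.card_image_le (s := A) (f := fun p : ℤ × ℤ => (p.1 - 1, p.2))
      have h3 := Finset.card_image_le (s := A) (f := fun p : ℤ × ℤ => (p.1, p.2 - 1))
      rw [hN]
      omega
    have hEGcard : EG.card ≤ 6 * N := by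
      rw [hEG, Finset.card_product]
      have hb2 : (Finset.univ : Finset Bool).card = 2 := by simp
      rw [hb2]
      omega
    have hlog : Real.log ((EG.card : ℝ) + 1) ≤ 2 + (B - t) := by
      have hNpos : (0:ℝ) < (N:ℝ) := by
        have : 0 < N := hN1
        exact_mod_cast this
      have h1 : ((EG.card : ℝ) + 1) ≤ 7 * (N:ℝ) := by
        have ha : (EG.card : ℝ) ≤ 6 * (N:ℝ) := by exact_mod_cast hEGcard
        have hb : (1:ℝ) ≤ (N:ℝ) := by exact_mod_cast hN1
        linarith
      have h2 : Real.log ((EG.card:ℝ) + 1) ≤ Real.log (7 * (N:ℝ)) :=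
        Real.log_le_log (by positivity) h1
      have h3 : Real.log (7 * (N:ℝ)) = Real.log 7 + Real.log (N:ℝ) :=
        Real.log_mul (by norm_num) (ne_of_gt hNpos)
      have h4 : Real.log (N:ℝ) ≤ B - t := by
        have h5 : Real.log ((N:ℝ) * Real.exp t) ≤ Real.log S :=
          Real.log_le_log (by positivity) hNS
        rw [Real.log_mul (ne_of_gt hNpos) (Real.exp_ne_zero t), Real.log_exp, ← hB] at h5
        linarith
      linarith [log7_le_two]
    have hThE2 : ∑ e ∈ EG, ThE e ^ 2 ≤ (1/8) * ((B - t) + 2) + 3 := by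
      refine le_trans hflow ?_
      have hl0 : 0 ≤ Real.log ((EG.card : ℝ) + 1) := by
        apply Real.log_nonneg
        have := Nat.cast_nonneg (α := ℝ) EG.card
        linarith
      linarith
    have hY2 : ∑ e ∈ EG, Y e ^ 2 ≤ (4 * S) * (B - t) := by
      rw [hYsq]
      exact energy
    have e1 : (u (0,0) - t)^2 = (∑ e ∈ EG, ThE e * Y e)^2 := by
      rw [← pair2, pair1]
    rw [e1]
    refine le_trans cs ?_
    apply mul_le_mul hThE2 hY2 (Finset.sum_nonneg (fun e _ => sq_nonneg _)) (by linarith)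
  set δ := B - u (0,0) with hδ
  have hδ0 : 0 ≤ δ := by rw [hδ]; linarith
  set t := B - (4*δ + 100) with ht
  have htu : t < u (0,0) := by
    rw [ht]
    have : u (0,0) = B - δ := by rw [hδ]; ring
    rw [this]
    linarith
  have hk := key t htu
  have hBt : B - t = 4*δ + 100 := by rw [ht]; ring
  have hu0t : u (0,0) - t = 3*δ + 100 := by
    have h0 : u (0,0) = B - δ := by rw [hδ]; ring
    rw [ht, h0]; ring
  rw [hBt, hu0t] at hk
  nlinarith [hδ0, hT4, hSpos, hk]

theorem liouville_energy_lower_bound_Z2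
    (u : ℤ × ℤ → ℝ)
    (hu : ∀ p : ℤ × ℤ,
      (1 / 4 : ℝ) * ((u (p.1 + 1, p.2) - u p) + (u (p.1 - 1, p.2) - u p)
          + (u (p.1, p.2 + 1) - u p) + (u (p.1, p.2 - 1) - u p))
        + Real.exp (u p) = 0) :
    (4 : ENNReal) ≤ ∑' p : ℤ × ℤ, ENNReal.ofReal (4 * Real.exp (u p)) :=
  aux_liouville u hu
end

section
/- Let G = (V,E,μ,w) be a weighted graph, let u : V → ℝ be a solution of Δu + e^u = 0, and let σ ∈ ℝ be such that Ω_σ = {x ∈ V : u(x) ≥ σ} is finite. With G(σ) := Σ_{edges {x,y}∈E, u(x) < σ ≤ u(y)} w_{xy}/(u(y) − u(x)), one has G(σ) · Σ_{x∈Ω_σ} e^{u(x)} μ_x ≥ (w(∂Ω_σ))², where w(∂Ω_σ) is the total edge weight of the boundary of Ω_σ. -/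
/- STATEMENT 7: For a solution u of Δu + e^u = 0 and σ with finite superlevel set
   Ω_σ = {x : u(x) ≥ σ}, with G(σ) := Σ_{edges {x,y}, u(x) < σ ≤ u(y)} w_{xy}/(u(y) − u(x)),
   one has G(σ) · Σ_{x∈Ω_σ} e^{u(x)} μ_x ≥ (w(∂Ω_σ))², where
   w(∂Ω_σ) = Σ_{x∈Ω_σ} Σ_{y~x, y∉Ω_σ} w_{xy} (each boundary edge counted once). -/
theorem G_mul_energy_ge_boundary_sq
    {V : Type*} [DecidableEq V]
    (G : SimpleGraph V) [DecidableRel G.Adj] [∀ v, Fintype (G.neighborSet v)]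
    (w : V → V → ℝ) (μ : V → ℝ)
    (hw_symm : ∀ x y, w x y = w y x)
    (hw_pos : ∀ x y, G.Adj x y → 0 < w x y)
    (hμ_pos : ∀ x, 0 < μ x)
    (u : V → ℝ)
    (hu : ∀ x, (∑ y ∈ G.neighborFinset x, w x y * (u y - u x)) / μ x + Real.exp (u x) = 0)
    (σ : ℝ) (hfin : {x : V | σ ≤ u x}.Finite) :
    (∑' p : V × V,
        if G.Adj p.1 p.2 ∧ u p.1 < σ ∧ σ ≤ u p.2
        then w p.1 p.2 / (u p.2 - u p.1) else 0)
      * ∑ x ∈ hfin.toFinset, Real.exp (u x) * μ x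
    ≥ (∑ x ∈ hfin.toFinset,
        ∑ y ∈ (G.neighborFinset x).filter (fun y => y ∉ hfin.toFinset), w x y) ^ 2 := by
  classical
  set Ω : Finset V := hfin.toFinset with hΩdef
  have hmemΩ : ∀ x, x ∈ Ω ↔ σ ≤ u x := fun x => hfin.mem_toFinset
  set B : Finset V := Ω.biUnion (fun x => G.neighborFinset x) with hBdef
  set A : Finset (V × V) :=
    (B ×ˢ Ω).filter (fun p => G.Adj p.1 p.2 ∧ u p.1 < σ ∧ σ ≤ u p.2) with hAdef
  have hmemA : ∀ p : V × V, p ∈ A ↔ G.Adj p.1 p.2 ∧ u p.1 < σ ∧ σ ≤ u p.2 := by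
    intro p
    simp only [hAdef, Finset.mem_filter, Finset.mem_product, and_iff_right_iff_imp]
    rintro ⟨hadj, hlt, hle⟩
    refine ⟨Finset.mem_biUnion.2 ⟨p.2, (hmemΩ _).2 hle, ?_⟩, (hmemΩ _).2 hle⟩
    exact (SimpleGraph.mem_neighborFinset _ _ _).2 hadj.symm
  -- Step 1: the tsum is a finite sum over A
  have h1 : (∑' p : V × V,
      if G.Adj p.1 p.2 ∧ u p.1 < σ ∧ σ ≤ u p.2
      then w p.1 p.2 / (u p.2 - u p.1) else 0)
      = ∑ p ∈ A, w p.1 p.2 / (u p.2 - u p.1) := by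
    rw [tsum_eq_sum (s := A) (fun p hp => if_neg (fun h => hp ((hmemA p).2 h)))]
    exact Finset.sum_congr rfl fun p hp => if_pos ((hmemA p).1 hp)
  -- a general reindexing lemma between the double sum and A
  have hbij : ∀ F : V × V → ℝ,
      (∑ x ∈ Ω, ∑ y ∈ (G.neighborFinset x).filter (fun y => y ∉ Ω), F (y, x))
      = ∑ p ∈ A, F p := by
    intro F
    rw [show (∑ x ∈ Ω, ∑ y ∈ (G.neighborFinset x).filter (fun y => y ∉ Ω), F (y, x))
        = ∑ p ∈ Ω.sigma (fun x => (G.neighborFinset x).filter (fun y => y ∉ Ω)),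
          (fun p : Σ _ : V, V => F (p.2, p.1)) p from
      (Finset.sum_sigma Ω (fun x => (G.neighborFinset x).filter (fun y => y ∉ Ω))
        (fun p => F (p.2, p.1))).symm]
    refine Finset.sum_bij' (fun p _ => (p.2, p.1)) (fun p _ => ⟨p.2, p.1⟩) ?_ ?_ ?_ ?_ ?_
    · rintro ⟨x, y⟩ hp
      simp only [Finset.mem_sigma, Finset.mem_filter, SimpleGraph.mem_neighborFinset] at hp
      obtain ⟨hx, hadj, hy⟩ := hp
      exact (hmemA (y, x)).2 ⟨hadj.symm, not_le.1 (fun h => hy ((hmemΩ y).2 h)),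
        (hmemΩ x).1 hx⟩
    · intro p hp
      obtain ⟨hadj, hlt, hle⟩ := (hmemA p).1 hp
      simp only [Finset.mem_sigma, Finset.mem_filter, SimpleGraph.mem_neighborFinset]
      exact ⟨(hmemΩ _).2 hle, hadj.symm, fun h => absurd ((hmemΩ _).1 h) (not_le.2 hlt)⟩
    · rintro ⟨x, y⟩ _; rfl
    · rintro ⟨x, y⟩ _; rfl
    · rintro ⟨x, y⟩ _; rfl
  -- Step 2: boundary weight
  have hW : (∑ x ∈ Ω, ∑ y ∈ (G.neighborFinset x).filter (fun y => y ∉ Ω), w x y)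
      = ∑ p ∈ A, w p.1 p.2 := by
    rw [← hbij (fun p => w p.1 p.2)]
    exact Finset.sum_congr rfl fun x _ => Finset.sum_congr rfl fun y _ => hw_symm x y
  -- Step 3: energy identity
  have hE : (∑ x ∈ Ω, Real.exp (u x) * μ x)
      = ∑ p ∈ A, w p.1 p.2 * (u p.2 - u p.1) := by
    have hx : ∀ x ∈ Ω, Real.exp (u x) * μ x
        = ∑ y ∈ G.neighborFinset x, w x y * (u x - u y) := by
      intro x _
      have h := hu x
      have hμ : μ x ≠ 0 := (hμ_pos x).ne'
      have hs : (∑ y ∈ G.neighborFinset x, w x y * (u y - u x))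
          = -(Real.exp (u x) * μ x) := by
        field_simp at h; linarith
      have : ∀ y ∈ G.neighborFinset x, w x y * (u x - u y) = -(w x y * (u y - u x)) :=
        fun y _ => by ring
      rw [Finset.sum_congr rfl this, Finset.sum_neg_distrib, hs, neg_neg]
    rw [Finset.sum_congr rfl hx]
    have hsplit : ∀ x ∈ Ω,
        (∑ y ∈ G.neighborFinset x, w x y * (u x - u y))
        = (∑ y ∈ (G.neighborFinset x).filter (fun y => y ∈ Ω), w x y * (u x - u y))
          + ∑ y ∈ (G.neighborFinset x).filter (fun y => y ∉ Ω), w x y * (u x - u y) :=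
      fun x _ => (Finset.sum_filter_add_sum_filter_not _ _ _).symm
    rw [Finset.sum_congr rfl hsplit, Finset.sum_add_distrib]
    have hD : (∑ x ∈ Ω, ∑ y ∈ (G.neighborFinset x).filter (fun y => y ∈ Ω),
        w x y * (u x - u y)) = 0 := by
      have hswap : (∑ x ∈ Ω, ∑ y ∈ (G.neighborFinset x).filter (fun y => y ∈ Ω),
          w x y * (u x - u y))
          = ∑ y ∈ Ω, ∑ x ∈ (G.neighborFinset y).filter (fun x => x ∈ Ω),
            w x y * (u x - u y) := by
        refine Finset.sum_comm' ?_
        intro x y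
        simp only [Finset.mem_filter, SimpleGraph.mem_neighborFinset]
        constructor
        · rintro ⟨hx, hadj, hy⟩; exact ⟨⟨hadj.symm, hx⟩, hy⟩
        · rintro ⟨⟨hadj, hx⟩, hy⟩; exact ⟨hx, hadj.symm, hy⟩
      have hneg : (∑ y ∈ Ω, ∑ x ∈ (G.neighborFinset y).filter (fun x => x ∈ Ω),
          w x y * (u x - u y))
          = -∑ x ∈ Ω, ∑ y ∈ (G.neighborFinset x).filter (fun y => y ∈ Ω),
            w x y * (u x - u y) := by
        rw [← Finset.sum_neg_distrib]
        refine Finset.sum_congr rfl fun y _ => ?_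
        rw [← Finset.sum_neg_distrib]
        refine Finset.sum_congr rfl fun x _ => ?_
        rw [hw_symm x y]; ring
      have := hswap.trans hneg
      linarith
    rw [hD, zero_add]
    rw [← hbij (fun p => w p.1 p.2 * (u p.2 - u p.1))]
    refine Finset.sum_congr rfl fun x _ => Finset.sum_congr rfl fun y _ => ?_
    rw [hw_symm x y]
  -- Step 4: Cauchy–Schwarz
  rw [ge_iff_le, h1, hW, hE]
  refine Finset.sum_sq_le_sum_mul_sum_of_sq_eq_mul A ?_ ?_ ?_
  · intro p hp
    obtain ⟨hadj, hlt, hle⟩ := (hmemA p).1 hp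
    have hd : 0 < u p.2 - u p.1 := sub_pos.2 (lt_of_lt_of_le hlt hle)
    exact (div_pos (hw_pos _ _ hadj) hd).le
  · intro p hp
    obtain ⟨hadj, hlt, hle⟩ := (hmemA p).1 hp
    have hd : 0 < u p.2 - u p.1 := sub_pos.2 (lt_of_lt_of_le hlt hle)
    exact (mul_pos (hw_pos _ _ hadj) hd).le
  · intro p hp
    obtain ⟨hadj, hlt, hle⟩ := (hmemA p).1 hp
    have hd : (u p.2 - u p.1) ≠ 0 := (sub_pos.2 (lt_of_lt_of_le hlt hle)).ne'
    field_simp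
end

section
/- Let G = (V,E,μ,w) be a weighted graph satisfying the 2-dimensional isoperimetric inequality with constant C_IS := inf { (w(∂Ω))²/μ(Ω) : Ω ⊆ V finite nonempty } > 0, and let u : V → ℝ be a solution of Δu + e^u = 0 whose superlevel sets Ω_σ = {x ∈ V : u(x) ≥ σ} are all finite and with Σ_{x∈V} e^{u(x)} μ_x < ∞. With G(σ) := Σ_{edges {x,y}∈E, u(x) < σ ≤ u(y)} w_{xy}/(u(y) − u(x)), one has ∫_{−∞}^{+∞} e^σ G(σ) (Σ_{x∈Ω_σ} e^{u(x)} μ_x) dσ ≥ C_IS · Σ_{x∈V} e^{u(x)} μ_x. -/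
open MeasureTheory

/- STATEMENT 10: If C_IS = inf over finite nonempty Ω of (w(∂Ω))²/μ(Ω) > 0 and u
   solves Δu + e^u = 0 with all superlevel sets finite and finite energy, then
   ∫_{-∞}^{∞} e^σ G(σ) (Σ_{x∈Ω_σ} e^{u(x)} μ_x) dσ ≥ C_IS · Σ_x e^{u(x)} μ_x,
   where G(σ) := Σ_{edges {x,y}, u(x) < σ ≤ u(y)} w_{xy}/(u(y) − u(x)). -/
theorem lintegral_exp_G_energy_ge_CIS
    {V : Type*} [Nonempty V] [DecidableEq V]
    (G : SimpleGraph V) [DecidableRel G.Adj] [∀ v, Fintype (G.neighborSet v)]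
    (w : V → V → ℝ) (μ : V → ℝ)
    (hw_symm : ∀ x y, w x y = w y x)
    (hw_pos : ∀ x y, G.Adj x y → 0 < w x y)
    (hμ_pos : ∀ x, 0 < μ x)
    (hIS : 0 < ⨅ Ω : {s : Finset V // s.Nonempty},
        (∑ x ∈ Ω.1, ∑ y ∈ (G.neighborFinset x).filter (fun y => y ∉ Ω.1), w x y) ^ 2
          / ∑ x ∈ Ω.1, μ x)
    (u : V → ℝ)
    (hu : ∀ x, (∑ y ∈ G.neighborFinset x, w x y * (u y - u x)) / μ x + Real.exp (u x) = 0)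
    (hfin : ∀ σ : ℝ, {x : V | σ ≤ u x}.Finite)
    (hsum : Summable fun x => Real.exp (u x) * μ x) :
    ENNReal.ofReal
        ((⨅ Ω : {s : Finset V // s.Nonempty},
            (∑ x ∈ Ω.1, ∑ y ∈ (G.neighborFinset x).filter (fun y => y ∉ Ω.1), w x y) ^ 2
              / ∑ x ∈ Ω.1, μ x)
          * ∑' x, Real.exp (u x) * μ x)
      ≤ ∫⁻ σ : ℝ, ENNReal.ofReal
          (Real.exp σ
            * (∑' p : V × V,
                if G.Adj p.1 p.2 ∧ u p.1 < σ ∧ σ ≤ u p.2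
                then w p.1 p.2 / (u p.2 - u p.1) else 0)
            * ∑ x ∈ (hfin σ).toFinset, Real.exp (u x) * μ x) := by
  classical
  have hcount : Countable V := by
    have h1 := hsum.countable_support
    have h2 : Function.support (fun x => Real.exp (u x) * μ x) = Set.univ := by
      ext x
      simp [Function.mem_support, (mul_pos (Real.exp_pos (u x)) (hμ_pos x)).ne', (hμ_pos x).ne', (Real.exp_pos (u x)).ne']
    rw [h2] at h1
    exact Set.countable_univ_iff.mp h1
  set C := ⨅ Ω : {s : Finset V // s.Nonempty},
      (∑ x ∈ Ω.1, ∑ y ∈ (G.neighborFinset x).filter (fun y => y ∉ Ω.1), w x y) ^ 2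
        / ∑ x ∈ Ω.1, μ x with hCdef
  have hC0 : 0 ≤ C := hIS.le
  -- the PDE rewritten
  have hPDE : ∀ y, ∑ x ∈ G.neighborFinset y, w y x * (u y - u x) = Real.exp (u y) * μ y := by
    intro y
    have h := hu y
    have hμ := (hμ_pos y).ne'
    have h2 : ∑ x ∈ G.neighborFinset y, w y x * (u x - u y) = -(Real.exp (u y) * μ y) := by
      field_simp at h
      linarith
    have h3 : ∑ x ∈ G.neighborFinset y, w y x * (u y - u x)
        = -∑ x ∈ G.neighborFinset y, w y x * (u x - u y) := by
      rw [← Finset.sum_neg_distrib]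
      exact Finset.sum_congr rfl fun x _ => by ring
    rw [h3, h2, neg_neg]
  -- pointwise key inequality
  have key : ∀ σ : ℝ,
      C * ∑ x ∈ (hfin σ).toFinset, μ x ≤
        (∑' p : V × V, if G.Adj p.1 p.2 ∧ u p.1 < σ ∧ σ ≤ u p.2
            then w p.1 p.2 / (u p.2 - u p.1) else 0)
          * ∑ x ∈ (hfin σ).toFinset, Real.exp (u x) * μ x := by
    intro σ
    set Ω := (hfin σ).toFinset with hΩ
    have hmemΩ : ∀ x, x ∈ Ω ↔ σ ≤ u x := fun x => by
      rw [hΩ, Set.Finite.mem_toFinset]; rfl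
    set t : Finset (V × V) :=
      Ω.biUnion (fun y => (G.neighborFinset y).image fun x => (x, y)) with ht
    set t' : Finset (V × V) :=
      t.filter (fun p => G.Adj p.1 p.2 ∧ u p.1 < σ ∧ σ ≤ u p.2) with ht'
    have hmem_t' : ∀ p : V × V, p ∈ t' ↔ (G.Adj p.1 p.2 ∧ u p.1 < σ ∧ σ ≤ u p.2) := by
      intro p
      constructor
      · intro hp; exact (Finset.mem_filter.mp hp).2
      · intro hp
        refine Finset.mem_filter.mpr ⟨?_, hp⟩
        rw [ht]
        refine Finset.mem_biUnion.mpr ⟨p.2, (hmemΩ _).mpr hp.2.2, ?_⟩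
        exact Finset.mem_image.mpr ⟨p.1, (SimpleGraph.mem_neighborFinset _ _ _).mpr hp.1.symm, rfl⟩
    -- double-sum description of sums over t'
    have hdouble : ∀ f : V × V → ℝ,
        (∑ p ∈ t', f p)
          = ∑ y ∈ Ω, ∑ x ∈ (G.neighborFinset y).filter (fun x => x ∉ Ω), f (x, y) := by
      intro f
      have hdisj : (↑Ω : Set V).PairwiseDisjoint
          (fun y => (G.neighborFinset y).image fun x => (x, y)) := by
        intro a _ b _ hab
        simp only [Finset.disjoint_left]
        rintro p hp hq
        obtain ⟨x, -, rfl⟩ := Finset.mem_image.mp hp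
        obtain ⟨x', -, h'⟩ := Finset.mem_image.mp hq
        exact hab (congrArg Prod.snd h'.symm)
      rw [ht', Finset.sum_filter, ht, Finset.sum_biUnion hdisj]
      refine Finset.sum_congr rfl fun y hy => ?_
      rw [Finset.sum_image (fun a _ b _ h => congrArg Prod.fst h), Finset.sum_filter]
      refine Finset.sum_congr rfl fun x hx => ?_
      have hadj : G.Adj y x := (SimpleGraph.mem_neighborFinset _ _ _).mp hx
      have hyΩ : σ ≤ u y := (hmemΩ y).mp hy
      have hiff : (G.Adj x y ∧ u x < σ ∧ σ ≤ u y) ↔ x ∉ Ω := by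
        rw [hmemΩ, not_le]
        exact ⟨fun h => h.2.1, fun h => ⟨hadj.symm, h, hyΩ⟩⟩
      exact if_congr hiff rfl rfl
    -- tsum equals finite sum over t'
    have htsum : (∑' p : V × V, if G.Adj p.1 p.2 ∧ u p.1 < σ ∧ σ ≤ u p.2
          then w p.1 p.2 / (u p.2 - u p.1) else 0)
        = ∑ p ∈ t', w p.1 p.2 / (u p.2 - u p.1) := by
      rw [tsum_eq_sum (s := t')
        (fun p hp => if_neg (fun hPp => hp ((hmem_t' p).mpr hPp)))]
      exact Finset.sum_congr rfl fun p hp => if_pos ((hmem_t' p).mp hp)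
    rw [htsum]
    -- Green's identity: interior part cancels
    have hzero : ∑ y ∈ Ω, ∑ x ∈ (G.neighborFinset y).filter (fun x => x ∈ Ω),
        w y x * (u y - u x) = 0 := by
      have hrw : ∀ y, (G.neighborFinset y).filter (fun x => x ∈ Ω)
          = Ω.filter (fun x => G.Adj y x) := by
        intro y; ext x
        simp [SimpleGraph.mem_neighborFinset, and_comm]
      have e1 : ∑ y ∈ Ω, ∑ x ∈ (G.neighborFinset y).filter (fun x => x ∈ Ω),
            w y x * (u y - u x)
          = ∑ y ∈ Ω, ∑ x ∈ Ω, if G.Adj y x then w y x * (u y - u x) else 0 :=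
        Finset.sum_congr rfl fun y _ => by rw [hrw y, Finset.sum_filter]
      have key0 : ∀ y x : V, (if G.Adj y x then w y x * (u y - u x) else 0)
          = -(if G.Adj x y then w x y * (u x - u y) else 0) := by
        intro y x
        by_cases h : G.Adj y x
        · rw [if_pos h, if_pos h.symm, hw_symm y x]; ring
        · rw [if_neg h, if_neg (fun h' => h h'.symm), neg_zero]
      have e2 : (∑ y ∈ Ω, ∑ x ∈ Ω, if G.Adj y x then w y x * (u y - u x) else 0)
          = -(∑ y ∈ Ω, ∑ x ∈ Ω, if G.Adj y x then w y x * (u y - u x) else 0) := by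
        conv_lhs => rw [Finset.sum_comm]
        rw [← Finset.sum_neg_distrib]
        refine Finset.sum_congr rfl fun x _ => ?_
        rw [← Finset.sum_neg_distrib]
        exact Finset.sum_congr rfl fun y _ => key0 y x
      rw [e1]; linarith [e2]
    have hgreen : ∑ y ∈ Ω, ∑ x ∈ (G.neighborFinset y).filter (fun x => x ∉ Ω),
        w y x * (u y - u x) = ∑ y ∈ Ω, Real.exp (u y) * μ y := by
      have e3 : ∀ y ∈ Ω,
          (∑ x ∈ (G.neighborFinset y).filter (fun x => x ∈ Ω), w y x * (u y - u x))
            + ∑ x ∈ (G.neighborFinset y).filter (fun x => x ∉ Ω), w y x * (u y - u x)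
          = Real.exp (u y) * μ y := by
        intro y _
        rw [Finset.sum_filter_add_sum_filter_not]
        exact hPDE y
      have e4 := Finset.sum_congr rfl e3
      rw [Finset.sum_add_distrib, hzero, zero_add] at e4
      exact e4
    -- the three quantities
    have hD : (∑ p ∈ t', w p.2 p.1 * (u p.2 - u p.1)) = ∑ x ∈ Ω, Real.exp (u x) * μ x := by
      rw [hdouble (fun p => w p.2 p.1 * (u p.2 - u p.1)), ← hgreen]
    rcases Finset.eq_empty_or_nonempty Ω with hΩe | hne
    · rw [hΩe]
      simp only [Finset.sum_empty, mul_zero, le_refl]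
    -- C ≤ W^2 / μ(Ω)
    have hμΩpos : 0 < ∑ x ∈ Ω, μ x := Finset.sum_pos (fun x _ => hμ_pos x) hne
    have hCle : C ≤ (∑ p ∈ t', w p.2 p.1) ^ 2 / ∑ x ∈ Ω, μ x := by
      have hbdd : BddBelow (Set.range fun Ω : {s : Finset V // s.Nonempty} =>
          (∑ x ∈ Ω.1, ∑ y ∈ (G.neighborFinset x).filter (fun y => y ∉ Ω.1), w x y) ^ 2
            / ∑ x ∈ Ω.1, μ x) := by
        refine ⟨0, ?_⟩
        rintro r ⟨Ω', rfl⟩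
        exact div_nonneg (sq_nonneg _) (Finset.sum_nonneg fun x _ => (hμ_pos x).le)
      have h := ciInf_le hbdd (⟨Ω, hne⟩ : {s : Finset V // s.Nonempty})
      have hWeq : (∑ p ∈ t', w p.2 p.1)
          = ∑ x ∈ Ω, ∑ y ∈ (G.neighborFinset x).filter (fun y => y ∉ Ω), w x y :=
        hdouble (fun p => w p.2 p.1)
      rw [hCdef, hWeq]
      exact h
    have hCW : C * ∑ x ∈ Ω, μ x ≤ (∑ p ∈ t', w p.2 p.1) ^ 2 := (le_div_iff₀ hμΩpos).mp hCle
    by_cases ht'e : t' = ∅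
    · exfalso
      rw [ht'e, Finset.sum_empty] at hCW
      nlinarith [mul_pos hIS hμΩpos]
    · have ht'ne : t'.Nonempty := Finset.nonempty_iff_ne_empty.mpr ht'e
      have hpos : ∀ p ∈ t', 0 < w p.2 p.1 * (u p.2 - u p.1) := by
        intro p hp
        have hPp := (hmem_t' p).mp hp
        exact mul_pos (hw_pos _ _ hPp.1.symm) (sub_pos.mpr (lt_of_lt_of_le hPp.2.1 hPp.2.2))
      have hDpos : 0 < ∑ p ∈ t', w p.2 p.1 * (u p.2 - u p.1) := Finset.sum_pos hpos ht'ne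
      have hCS : (∑ p ∈ t', w p.2 p.1) ^ 2 / (∑ p ∈ t', w p.2 p.1 * (u p.2 - u p.1))
          ≤ ∑ p ∈ t', w p.1 p.2 / (u p.2 - u p.1) := by
        have h := Finset.sq_sum_div_le_sum_sq_div t' (fun p => w p.2 p.1)
          (g := fun p => w p.2 p.1 * (u p.2 - u p.1)) hpos
        refine le_trans h (le_of_eq (Finset.sum_congr rfl fun p hp => ?_))
        have hPp := (hmem_t' p).mp hp
        have hwne : w p.2 p.1 ≠ 0 := (hw_pos _ _ hPp.1.symm).ne'
        show w p.2 p.1 ^ 2 / (w p.2 p.1 * (u p.2 - u p.1)) = w p.1 p.2 / (u p.2 - u p.1)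
        rw [sq, mul_div_mul_left _ _ hwne, hw_symm p.2 p.1]
      have hW2 : (∑ p ∈ t', w p.2 p.1) ^ 2
          ≤ (∑ p ∈ t', w p.1 p.2 / (u p.2 - u p.1))
            * ∑ p ∈ t', w p.2 p.1 * (u p.2 - u p.1) := (div_le_iff₀ hDpos).mp hCS
      calc C * ∑ x ∈ Ω, μ x ≤ (∑ p ∈ t', w p.2 p.1) ^ 2 := hCW
        _ ≤ (∑ p ∈ t', w p.1 p.2 / (u p.2 - u p.1))
            * ∑ p ∈ t', w p.2 p.1 * (u p.2 - u p.1) := hW2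
        _ = _ := by rw [hD]
  -- layer-cake computation
  set F : V → ℝ → ENNReal := fun x σ =>
    (Set.Iic (u x)).indicator (fun σ => ENNReal.ofReal (Real.exp σ * μ x)) σ with hF
  have hFmeas : ∀ x, AEMeasurable (F x) (volume : Measure ℝ) := fun x =>
    (((Real.measurable_exp.mul_const (μ x)).ennreal_ofReal).indicator measurableSet_Iic).aemeasurable
  have hFint : ∀ x, (∫⁻ σ, F x σ) = ENNReal.ofReal (Real.exp (u x) * μ x) := by
    intro x
    rw [hF]
    simp only
    rw [lintegral_indicator measurableSet_Iic]
    rw [← ofReal_integral_eq_lintegral_ofReal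
      ((integrableOn_exp_Iic (u x)).mul_const (μ x))
      (Filter.Eventually.of_forall fun σ => mul_nonneg (Real.exp_pos σ).le (hμ_pos x).le)]
    rw [integral_mul_const, integral_exp_Iic]
  have hEq1 : ∀ σ : ℝ, (ENNReal.ofReal C) * ∑' x, F x σ
      = ENNReal.ofReal (C * (Real.exp σ * ∑ x ∈ (hfin σ).toFinset, μ x)) := by
    intro σ
    have h0 : ∀ x ∉ (hfin σ).toFinset, F x σ = 0 := by
      intro x hx
      have hxs : σ ∉ Set.Iic (u x) := by
        intro h
        exact hx ((Set.Finite.mem_toFinset (hfin σ)).mpr h)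
      show (Set.Iic (u x)).indicator (fun τ => ENNReal.ofReal (Real.exp τ * μ x)) σ = 0
      exact Set.indicator_of_notMem hxs (fun τ => ENNReal.ofReal (Real.exp τ * μ x))
    have h1 : (∑' x, F x σ) = ∑ x ∈ (hfin σ).toFinset, ENNReal.ofReal (Real.exp σ * μ x) := by
      rw [tsum_eq_sum h0]
      refine Finset.sum_congr rfl fun x hx => ?_
      show (Set.Iic (u x)).indicator (fun τ => ENNReal.ofReal (Real.exp τ * μ x)) σ
        = ENNReal.ofReal (Real.exp σ * μ x)
      exact Set.indicator_of_mem
        (show σ ∈ Set.Iic (u x) from (Set.Finite.mem_toFinset (hfin σ)).mp hx)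
        (fun τ => ENNReal.ofReal (Real.exp τ * μ x))
    have h2 : (∑ x ∈ (hfin σ).toFinset, Real.exp σ * μ x)
        = Real.exp σ * ∑ x ∈ (hfin σ).toFinset, μ x := (Finset.mul_sum _ _ _).symm
    rw [h1, ← ENNReal.ofReal_sum_of_nonneg
      (fun x _ => mul_nonneg (Real.exp_pos σ).le (hμ_pos x).le),
      ← ENNReal.ofReal_mul hC0, h2]
  calc ENNReal.ofReal (C * ∑' x, Real.exp (u x) * μ x)
      = ENNReal.ofReal C * ENNReal.ofReal (∑' x, Real.exp (u x) * μ x) :=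
        ENNReal.ofReal_mul hC0
    _ = ENNReal.ofReal C * ∑' x, ENNReal.ofReal (Real.exp (u x) * μ x) := by
        rw [ENNReal.ofReal_tsum_of_nonneg
          (fun x => mul_nonneg (Real.exp_pos _).le (hμ_pos x).le) hsum]
    _ = ENNReal.ofReal C * ∑' x, ∫⁻ σ, F x σ := by simp_rw [hFint]
    _ = ENNReal.ofReal C * ∫⁻ σ, ∑' x, F x σ := by rw [lintegral_tsum hFmeas]
    _ = ∫⁻ σ, ENNReal.ofReal C * ∑' x, F x σ :=
        (lintegral_const_mul' _ _ ENNReal.ofReal_ne_top).symm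
    _ ≤ _ := by
        refine lintegral_mono fun σ => ?_
        rw [hEq1 σ]
        apply ENNReal.ofReal_le_ofReal
        calc C * (Real.exp σ * ∑ x ∈ (hfin σ).toFinset, μ x)
            = Real.exp σ * (C * ∑ x ∈ (hfin σ).toFinset, μ x) := by ring
          _ ≤ Real.exp σ * ((∑' p : V × V, if G.Adj p.1 p.2 ∧ u p.1 < σ ∧ σ ≤ u p.2
                then w p.1 p.2 / (u p.2 - u p.1) else 0)
              * ∑ x ∈ (hfin σ).toFinset, Real.exp (u x) * μ x) :=
            mul_le_mul_of_nonneg_left (key σ) (Real.exp_pos σ).le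
          _ = _ := by ring
end

section
/- Let G = (V,E,μ,w) be a weighted graph with finite weighted degree Deg(G) := sup_{x∈V} (Σ_{y~x} w_{xy})/μ_x < ∞, and let u : V → ℝ be a function whose superlevel sets Ω_σ = {x ∈ V : u(x) ≥ σ} are all finite and with Σ_{x∈V} e^{u(x)} μ_x < ∞. With G(σ) := Σ_{edges {x,y}∈E, u(x) < σ ≤ u(y)} w_{xy}/(u(y) − u(x)), one has ∫_{−∞}^{+∞} e^σ G(σ) (Σ_{x∈Ω_σ} e^{u(x)} μ_x) dσ ≤ Deg(G) · (Σ_{x∈V} e^{u(x)} μ_x)². -/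
open MeasureTheory

/- STATEMENT 11: On a weighted graph with Deg(G) = sup_x (Σ_{y~x} w_{xy})/μ_x < ∞,
   if all superlevel sets of u are finite and Σ_V e^u μ < ∞, then
   ∫_{-∞}^{∞} e^σ G(σ) (Σ_{x∈Ω_σ} e^{u(x)} μ_x) dσ ≤ Deg(G) · (Σ_x e^{u(x)} μ_x)²,
   where G(σ) := Σ_{edges {x,y}, u(x) < σ ≤ u(y)} w_{xy}/(u(y) − u(x)). -/
set_option maxHeartbeats 1000000 in
theorem lintegral_exp_G_energy_le_Deg_mul_sq
    {V : Type*} [Nonempty V]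
    (G : SimpleGraph V) [DecidableRel G.Adj] [∀ v, Fintype (G.neighborSet v)]
    (w : V → V → ℝ) (μ : V → ℝ)
    (hw_symm : ∀ x y, w x y = w y x)
    (hw_pos : ∀ x y, G.Adj x y → 0 < w x y)
    (hμ_pos : ∀ x, 0 < μ x)
    (hDeg_bdd : BddAbove (Set.range fun x => (∑ y ∈ G.neighborFinset x, w x y) / μ x))
    (u : V → ℝ)
    (hfin : ∀ σ : ℝ, {x : V | σ ≤ u x}.Finite)
    (hsum : Summable fun x => Real.exp (u x) * μ x) :
    ∫⁻ σ : ℝ, ENNReal.ofReal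
        (Real.exp σ
          * (∑' p : V × V,
              if G.Adj p.1 p.2 ∧ u p.1 < σ ∧ σ ≤ u p.2
              then w p.1 p.2 / (u p.2 - u p.1) else 0)
          * ∑ x ∈ (hfin σ).toFinset, Real.exp (u x) * μ x)
      ≤ ENNReal.ofReal
          ((⨆ x, (∑ y ∈ G.neighborFinset x, w x y) / μ x)
            * (∑' x, Real.exp (u x) * μ x) ^ 2) := by
  classical
  -- V is countable
  have hcount : Countable V := by
    rw [← Set.countable_univ_iff]
    have hsub : (Set.univ : Set V) ⊆ ⋃ n : ℕ, {x : V | -(n : ℝ) ≤ u x} := by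
      intro x _
      obtain ⟨n, hn⟩ := exists_nat_ge (-(u x))
      exact Set.mem_iUnion.mpr ⟨n, by simp only [Set.mem_setOf_eq]; linarith⟩
    exact Set.Countable.mono hsub (Set.countable_iUnion fun n => (hfin _).countable)
  set T : ℝ := ∑' x, Real.exp (u x) * μ x with hTdef
  have hterm_nonneg : ∀ x : V, 0 ≤ Real.exp (u x) * μ x := fun x =>
    mul_nonneg (Real.exp_pos _).le (hμ_pos x).le
  have hT_nonneg : 0 ≤ T := tsum_nonneg hterm_nonneg
  set D : ℝ := ⨆ x, (∑ y ∈ G.neighborFinset x, w x y) / μ x with hDdef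
  have hW_nonneg : ∀ x, 0 ≤ ∑ y ∈ G.neighborFinset x, w x y := fun x =>
    Finset.sum_nonneg fun y hy => (hw_pos x y (by simpa using hy)).le
  have hle_D : ∀ x, (∑ y ∈ G.neighborFinset x, w x y) / μ x ≤ D := fun x =>
    le_ciSup hDeg_bdd x
  have hD_nonneg : 0 ≤ D := by
    obtain ⟨x⟩ := ‹Nonempty V›
    exact le_trans (div_nonneg (hW_nonneg x) (hμ_pos x).le) (hle_D x)
  -- the summand
  set g : V × V → ℝ → ℝ := fun p σ =>
    if G.Adj p.1 p.2 ∧ u p.1 < σ ∧ σ ≤ u p.2 then w p.1 p.2 / (u p.2 - u p.1) else 0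
    with hgdef
  have hg_nonneg : ∀ p σ, 0 ≤ g p σ := by
    intro p σ
    simp only [hgdef]
    split_ifs with h
    · exact le_of_lt (div_pos (hw_pos _ _ h.1) (by linarith [h.2.1, h.2.2]))
    · exact le_rfl
  -- finite support of g in p for fixed σ
  have hg_supp : ∀ σ : ℝ, ∀ p ∉ ((hfin σ).toFinset.biUnion
      (fun y => (G.neighborFinset y).image (fun x => (x, y)))), g p σ = 0 := by
    intro σ p hp
    simp only [hgdef]
    rw [if_neg]
    intro h
    apply hp
    refine Finset.mem_biUnion.mpr ⟨p.2, ?_, ?_⟩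
    · exact (hfin σ).mem_toFinset.mpr h.2.2
    · exact Finset.mem_image.mpr ⟨p.1, by simp [G.mem_neighborFinset, h.1.symm]⟩
  have hg_summable : ∀ σ : ℝ, Summable fun p => g p σ := fun σ =>
    summable_of_ne_finset_zero (hg_supp σ)
  have hg_meas : ∀ p : V × V, Measurable fun σ => g p σ := by
    intro p
    have heq : (fun σ => g p σ) = (Set.Ioc (u p.1) (u p.2)).indicator
        (fun _ => if G.Adj p.1 p.2 then w p.1 p.2 / (u p.2 - u p.1) else 0) := by
      funext σ
      simp only [hgdef, Set.indicator_apply, Set.mem_Ioc]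
      split_ifs <;> tauto
    rw [heq]
    exact measurable_const.indicator measurableSet_Ioc
  -- the per-pair bound
  set B : V × V → ENNReal := fun p =>
    if G.Adj p.1 p.2 then ENNReal.ofReal (w p.1 p.2 * Real.exp (u p.2)) else 0 with hBdef
  have key : ∀ p : V × V,
      ∫⁻ σ : ℝ, ENNReal.ofReal (Real.exp σ * g p σ) ≤ B p := by
    intro p
    by_cases hadj : G.Adj p.1 p.2
    · by_cases hab : u p.1 < u p.2
      · set a := u p.1; set b := u p.2
        set c := w p.1 p.2 / (b - a) with hcdef
        have hc_nonneg : 0 ≤ c := le_of_lt (div_pos (hw_pos _ _ hadj) (by linarith))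
        have heq : (fun σ => ENNReal.ofReal (Real.exp σ * g p σ)) =
            (Set.Ioc a b).indicator (fun σ => ENNReal.ofReal (Real.exp σ * c)) := by
          funext σ
          by_cases hm : σ ∈ Set.Ioc a b
          · rw [Set.indicator_of_mem hm]
            simp only [hgdef]
            rw [if_pos ⟨hadj, hm.1, hm.2⟩]
          · rw [Set.indicator_of_notMem hm]
            simp only [hgdef]
            rw [if_neg (fun h => hm ⟨h.2.1, h.2.2⟩), mul_zero, ENNReal.ofReal_zero]
        rw [heq, lintegral_indicator measurableSet_Ioc]
        have hint : IntegrableOn (fun σ => Real.exp σ * c) (Set.Ioc a b) := by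
          exact (Real.continuous_exp.mul continuous_const).integrableOn_Ioc
        rw [← ofReal_integral_eq_lintegral_ofReal hint
          (Filter.Eventually.of_forall fun σ => mul_nonneg (Real.exp_pos σ).le hc_nonneg)]
        have hval : ∫ σ in Set.Ioc a b, Real.exp σ * c = (Real.exp b - Real.exp a) * c := by
          rw [integral_mul_const, ← intervalIntegral.integral_of_le hab.le, integral_exp]
        rw [hval]
        simp only [hBdef]
        rw [if_pos hadj]
        apply ENNReal.ofReal_le_ofReal
        -- (e^b - e^a) * c ≤ w * e^b
        have hexp : Real.exp b - Real.exp a ≤ (b - a) * Real.exp b := by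
          have h1 := Real.add_one_le_exp (a - b)
          have h2 : (a - b + 1) * Real.exp b ≤ Real.exp (a - b) * Real.exp b :=
            mul_le_mul_of_nonneg_right h1 (Real.exp_pos b).le
          rw [← Real.exp_add, sub_add_cancel] at h2
          nlinarith [Real.exp_pos b]
        calc (Real.exp b - Real.exp a) * c ≤ ((b - a) * Real.exp b) * c :=
              mul_le_mul_of_nonneg_right hexp hc_nonneg
          _ = w p.1 p.2 * Real.exp b := by
              have hba : b - a ≠ 0 := ne_of_gt (by linarith)
              rw [hcdef]
              field_simp
      · have heq : (fun σ => ENNReal.ofReal (Real.exp σ * g p σ)) = fun _ => 0 := by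
          funext σ
          simp only [hgdef]
          rw [if_neg (by intro h; exact hab (lt_of_lt_of_le h.2.1 h.2.2)), mul_zero,
            ENNReal.ofReal_zero]
        rw [heq, lintegral_zero]
        exact zero_le
    · have heq : (fun σ => ENNReal.ofReal (Real.exp σ * g p σ)) = fun _ => 0 := by
        funext σ
        simp only [hgdef]
        rw [if_neg (by tauto), mul_zero, ENNReal.ofReal_zero]
      rw [heq, lintegral_zero]
      exact zero_le
  -- sum of the bounds
  have sumB : ∑' p : V × V, B p ≤ ENNReal.ofReal D * ENNReal.ofReal T := by
    rw [ENNReal.tsum_prod', ENNReal.tsum_comm]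
    have inner : ∀ y : V, (∑' x : V, B (x, y)) =
        ENNReal.ofReal ((∑ x ∈ G.neighborFinset y, w y x) * Real.exp (u y)) := by
      intro y
      have h1 : ∀ x ∉ G.neighborFinset y, B (x, y) = 0 := by
        intro x hx
        simp only [hBdef]
        rw [if_neg]
        intro h
        exact hx ((G.mem_neighborFinset y x).mpr h.symm)
      rw [tsum_eq_sum h1]
      have h2 : ∀ x ∈ G.neighborFinset y, B (x, y) =
          ENNReal.ofReal (w y x * Real.exp (u y)) := by
        intro x hx
        simp only [hBdef]
        rw [if_pos ((G.mem_neighborFinset y x).mp hx).symm, hw_symm]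
      rw [Finset.sum_congr rfl h2,
        ← ENNReal.ofReal_sum_of_nonneg (fun x hx => mul_nonneg
          (hw_pos y x ((G.mem_neighborFinset y x).mp hx)).le (Real.exp_pos _).le),
        ← Finset.sum_mul]
    calc (∑' (y : V) (x : V), B (x, y))
        = ∑' y : V, ENNReal.ofReal ((∑ x ∈ G.neighborFinset y, w y x) * Real.exp (u y)) := by
          exact tsum_congr inner
      _ ≤ ∑' y : V, ENNReal.ofReal D * ENNReal.ofReal (Real.exp (u y) * μ y) := by
          apply ENNReal.tsum_le_tsum
          intro y
          rw [← ENNReal.ofReal_mul hD_nonneg]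
          apply ENNReal.ofReal_le_ofReal
          have hWy : (∑ x ∈ G.neighborFinset y, w y x) ≤ D * μ y :=
            (div_le_iff₀ (hμ_pos y)).mp (hle_D y)
          calc (∑ x ∈ G.neighborFinset y, w y x) * Real.exp (u y)
              ≤ (D * μ y) * Real.exp (u y) :=
                mul_le_mul_of_nonneg_right hWy (Real.exp_pos _).le
            _ = D * (Real.exp (u y) * μ y) := by ring
      _ = ENNReal.ofReal D * ENNReal.ofReal T := by
          rw [ENNReal.tsum_mul_left, ← ENNReal.ofReal_tsum_of_nonneg hterm_nonneg hsum]
  -- main chain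
  calc ∫⁻ σ : ℝ, ENNReal.ofReal (Real.exp σ * (∑' p : V × V, g p σ)
          * ∑ x ∈ (hfin σ).toFinset, Real.exp (u x) * μ x)
      ≤ ∫⁻ σ : ℝ, ENNReal.ofReal T * ENNReal.ofReal (Real.exp σ * (∑' p : V × V, g p σ)) := by
        apply lintegral_mono
        intro σ
        dsimp only
        have hS : (∑ x ∈ (hfin σ).toFinset, Real.exp (u x) * μ x) ≤ T :=
          hsum.sum_le_tsum _ (fun x _ => hterm_nonneg x)
        have hEG : 0 ≤ Real.exp σ * (∑' p : V × V, g p σ) :=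
          mul_nonneg (Real.exp_pos σ).le (tsum_nonneg fun p => hg_nonneg p σ)
        rw [← ENNReal.ofReal_mul hT_nonneg]
        apply ENNReal.ofReal_le_ofReal
        calc Real.exp σ * (∑' p : V × V, g p σ)
              * ∑ x ∈ (hfin σ).toFinset, Real.exp (u x) * μ x
            ≤ Real.exp σ * (∑' p : V × V, g p σ) * T :=
              mul_le_mul_of_nonneg_left hS hEG
          _ = T * (Real.exp σ * (∑' p : V × V, g p σ)) := by ring
    _ = ENNReal.ofReal T * ∫⁻ σ : ℝ, ENNReal.ofReal (Real.exp σ * (∑' p : V × V, g p σ)) :=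
        lintegral_const_mul' _ _ ENNReal.ofReal_ne_top
    _ ≤ ENNReal.ofReal T * (ENNReal.ofReal D * ENNReal.ofReal T) := by
        apply mul_le_mul_right
        -- expand the ofReal of tsum
        have hexpand : ∀ σ : ℝ, ENNReal.ofReal (Real.exp σ * (∑' p : V × V, g p σ)) =
            ∑' p : V × V, ENNReal.ofReal (Real.exp σ * g p σ) := by
          intro σ
          rw [← tsum_mul_left,
            ENNReal.ofReal_tsum_of_nonneg
              (fun p => mul_nonneg (Real.exp_pos σ).le (hg_nonneg p σ))
              ((hg_summable σ).mul_left _)]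
        calc ∫⁻ σ : ℝ, ENNReal.ofReal (Real.exp σ * (∑' p : V × V, g p σ))
            = ∫⁻ σ : ℝ, ∑' p : V × V, ENNReal.ofReal (Real.exp σ * g p σ) := by
              exact lintegral_congr hexpand
          _ = ∑' p : V × V, ∫⁻ σ : ℝ, ENNReal.ofReal (Real.exp σ * g p σ) :=
              lintegral_tsum fun p =>
                ((Real.measurable_exp.mul (hg_meas p)).ennreal_ofReal).aemeasurable
          _ ≤ ∑' p : V × V, B p := ENNReal.tsum_le_tsum key
          _ ≤ ENNReal.ofReal D * ENNReal.ofReal T := sumB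
    _ = ENNReal.ofReal (D * T ^ 2) := by
        rw [← ENNReal.ofReal_mul hD_nonneg, ← ENNReal.ofReal_mul hT_nonneg]
        congr 1
        ring
end
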